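/- arXiv:1906.06179 — 6 statements merged into one kernel-verified Lean document; each statement's English description precedes it below -/
import Mathlib

section
/- For all natural numbers p, q with 0 < q < p, there exists a (0,p)-mediated sequence A containing q whose cardinality satisfies #A < (1/2)·(log₂(p) + 3/2)². -/
/-- For integers `s < p`, an `(s,p)`-mediated sequence is a finite set `A` of integers with
`s, p ∈ A`, `min A = s`, `max A = p`, and such that every element of `A` other than `s` and `p`
is the average `(v+w)/2` of two distinct elements `v, w ∈ A`. -/
def IsMediatedSeq (s p : ℤ) (A : Finset ℤ) : Prop :=
  s ∈ A ∧ p ∈ A ∧ (∀ a ∈ A, s ≤ a ∧ a ≤ p) ∧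
    ∀ a ∈ A, a ≠ s → a ≠ p → ∃ v ∈ A, ∃ w ∈ A, v ≠ w ∧ 2 * a = v + w


/-- Bisection chain of midpoints tracking `x` inside `[L, L + 2^k]`. -/
def mchain (x : ℤ) : ℤ → ℕ → Finset ℤ
  | _, 0 => ∅
  | L, (k+1) =>
    insert (L + 2^k) (if x ≤ L + 2^k then mchain x L k else mchain x (L + 2^k) k)

lemma mchain_lb (x : ℤ) : ∀ (k : ℕ) (L : ℤ), ∀ a ∈ mchain x L k, L < a ∧ a < L + 2^k := by
  intro k
  induction k with
  | zero => intro L a ha; simp [mchain] at ha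
  | succ k ih =>
    intro L a ha
    rw [mchain] at ha
    rcases Finset.mem_insert.1 ha with h | h
    · subst h
      constructor
      · have : (0:ℤ) < 2^k := by positivity
        linarith
      · have : (2:ℤ)^k < 2^(k+1) := by
          have : (2:ℤ)^k > 0 := by positivity
          rw [pow_succ]; linarith
        linarith
    · split_ifs at h with hc
      · obtain ⟨h1, h2⟩ := ih L a h
        refine ⟨h1, ?_⟩
        have : (2:ℤ)^k < 2^(k+1) := by
          have : (2:ℤ)^k > 0 := by positivity
          rw [pow_succ]; linarith
        linarith
      · obtain ⟨h1, h2⟩ := ih (L + 2^k) a h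
        constructor
        · have : (0:ℤ) < 2^k := by positivity
          linarith
        · have : L + 2^k + 2^k = L + 2^(k+1) := by rw [pow_succ]; ring
          linarith

lemma mchain_card (x : ℤ) : ∀ (k : ℕ) (L : ℤ), (mchain x L k).card ≤ k := by
  intro k
  induction k with
  | zero => intro L; simp [mchain]
  | succ k ih =>
    intro L
    rw [mchain]
    refine le_trans (Finset.card_insert_le _ _) ?_
    split_ifs <;> exact Nat.succ_le_succ (ih _)

lemma mchain_med (x : ℤ) : ∀ (k : ℕ) (L : ℤ), ∀ a ∈ mchain x L k,
    ∃ v ∈ insert L (insert (L + 2^k) (mchain x L k)),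
    ∃ w ∈ insert L (insert (L + 2^k) (mchain x L k)), v ≠ w ∧ 2 * a = v + w := by
  intro k
  induction k with
  | zero => intro L a ha; simp [mchain] at ha
  | succ k ih =>
    intro L a ha
    have hpow : (0:ℤ) < 2^k := by positivity
    have hps : L + 2^k + 2^k = L + 2^(k+1) := by rw [pow_succ]; ring
    rw [mchain] at ha ⊢
    rcases Finset.mem_insert.1 ha with h | h
    · subst h
      refine ⟨L, by simp, L + 2^(k+1), by simp, ?_, by rw [pow_succ]; ring⟩
      have : (0:ℤ) < 2^(k+1) := by positivity
      intro he; linarith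
    · split_ifs at h ⊢ with hc
      · obtain ⟨v, hv, w, hw, hvw, heq⟩ := ih L a h
        have hmap : ∀ b, b ∈ insert L (insert (L + 2^k) (mchain x L k)) →
            b ∈ insert L (insert (L + 2^(k+1)) (insert (L + 2^k) (mchain x L k))) := by
          intro b hb
          rcases Finset.mem_insert.1 hb with h1 | h1
          · exact Finset.mem_insert.2 (Or.inl h1)
          · exact Finset.mem_insert.2 (Or.inr (Finset.mem_insert.2 (Or.inr h1)))
        exact ⟨v, hmap v hv, w, hmap w hw, hvw, heq⟩
      · obtain ⟨v, hv, w, hw, hvw, heq⟩ := ih (L + 2^k) a h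
        have hmap : ∀ b, b ∈ insert (L + 2^k) (insert (L + 2^k + 2^k) (mchain x (L + 2^k) k)) →
            b ∈ insert L (insert (L + 2^(k+1)) (insert (L + 2^k) (mchain x (L + 2^k) k))) := by
          intro b hb
          rcases Finset.mem_insert.1 hb with h1 | h1
          · subst h1; exact Finset.mem_insert.2 (Or.inr (Finset.mem_insert.2 (Or.inr (Finset.mem_insert_self _ _))))
          · rcases Finset.mem_insert.1 h1 with h2 | h2
            · rw [h2, hps]; exact Finset.mem_insert.2 (Or.inr (Finset.mem_insert_self _ _))
            · exact Finset.mem_insert.2 (Or.inr (Finset.mem_insert.2 (Or.inr (Finset.mem_insert.2 (Or.inr h2)))))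
        exact ⟨v, hmap v hv, w, hmap w hw, hvw, heq⟩

lemma mchain_mem (x : ℤ) : ∀ (k : ℕ) (L : ℤ), L ≤ x → x ≤ L + 2^k →
    x ∈ insert L (insert (L + 2^k) (mchain x L k)) := by
  intro k
  induction k with
  | zero =>
    intro L h1 h2
    simp only [pow_zero] at h2
    have : x = L ∨ x = L + 1 := by omega
    rcases this with h | h <;> subst h <;> simp
  | succ k ih =>
    intro L h1 h2
    have hps : L + 2^k + 2^k = L + 2^(k+1) := by rw [pow_succ]; ring
    rw [mchain]
    by_cases hc : x ≤ L + 2^k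
    · rw [if_pos hc]
      have := ih L h1 hc
      rcases Finset.mem_insert.1 this with h | h
      · exact Finset.mem_insert.2 (Or.inl h)
      · rcases Finset.mem_insert.1 h with h' | h'
        · exact Finset.mem_insert.2 (Or.inr (Finset.mem_insert.2 (Or.inr (h' ▸ Finset.mem_insert_self _ _))))
        · exact Finset.mem_insert.2 (Or.inr (Finset.mem_insert.2 (Or.inr (Finset.mem_insert.2 (Or.inr h')))))
    · rw [if_neg hc]
      push_neg at hc
      have := ih (L + 2^k) (le_of_lt hc) (by rw [hps]; exact h2)
      rcases Finset.mem_insert.1 this with h | h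
      · exact Finset.mem_insert.2 (Or.inr (Finset.mem_insert.2 (Or.inr (h ▸ Finset.mem_insert_self _ _))))
      · rcases Finset.mem_insert.1 h with h' | h'
        · rw [h', hps]; exact Finset.mem_insert.2 (Or.inr (Finset.mem_insert_self _ _))
        · exact Finset.mem_insert.2 (Or.inr (Finset.mem_insert.2 (Or.inr (Finset.mem_insert.2 (Or.inr h')))))


lemma logb_ge_helper (p a b : ℕ) (hb : 0 < b) (hp : 2 ≤ p) (h : 2^a ≤ p^b) :
    (a:ℝ)/(b:ℝ) ≤ Real.logb 2 (p:ℝ) := by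
  have h2 : ((2:ℝ))^a ≤ (p:ℝ)^b := by exact_mod_cast h
  have hlog : Real.logb 2 ((2:ℝ)^a) ≤ Real.logb 2 ((p:ℝ)^b) :=
    Real.logb_le_logb_of_le (by norm_num) (by positivity) h2
  rw [Real.logb_pow, Real.logb_pow, Real.logb_self_eq_one (by norm_num)] at hlog
  rw [div_le_iff₀ (by exact_mod_cast hb)]
  calc (a:ℝ) = a * 1 := by ring
  _ ≤ (b:ℝ) * Real.logb 2 p := by linarith
  _ = Real.logb 2 p * b := by ring

lemma close_case {A : Finset ℤ} {c : ℕ} (hcard : A.card ≤ c) {p a b : ℕ} (hb : 0 < b)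
    (hp : 2 ≤ p) (hpow : 2^a ≤ p^b) (hnum : (c:ℝ) < 1/2*((a:ℝ)/(b:ℝ) + 3/2)^2) :
    (A.card : ℝ) < 1/2 * (Real.logb 2 (p:ℝ) + 3/2)^2 := by
  have hl := logb_ge_helper p a b hb hp hpow
  have hc : (A.card:ℝ) ≤ c := by exact_mod_cast hcard
  have hab : (0:ℝ) ≤ (a:ℝ)/(b:ℝ) := by positivity
  nlinarith [mul_nonneg (sub_nonneg.2 hl) (by linarith : (0:ℝ) ≤ Real.logb 2 (p:ℝ) + (a:ℝ)/(b:ℝ) + 3)]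



def evens (m : ℕ) : Finset ℤ := (Finset.range (m+1)).image (fun i : ℕ => 2 * (i:ℤ))

lemma mem_evens {m : ℕ} {x : ℤ} : x ∈ evens m ↔ ∃ i : ℕ, i ≤ m ∧ x = 2 * (i:ℤ) := by
  simp [evens, Finset.mem_image, Finset.mem_range, Nat.lt_succ_iff, eq_comm]

lemma evens_card (m : ℕ) : (evens m).card ≤ m + 1 := by
  refine le_trans (Finset.card_image_le) ?_
  simp

lemma H_even (m : ℕ) (hm : 1 ≤ m) (q : ℕ) (hq : 0 < q) (hqp : q < 2*m) :
    ∃ A : Finset ℤ, IsMediatedSeq 0 ((2*m : ℕ) : ℤ) A ∧ (q:ℤ) ∈ A ∧ A.card ≤ m + 2 := by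
  refine ⟨insert (q:ℤ) (evens m), ⟨?_, ?_, ?_, ?_⟩, Finset.mem_insert_self _ _, ?_⟩
  · exact Finset.mem_insert.2 (Or.inr (mem_evens.2 ⟨0, by omega, by norm_num⟩))
  · exact Finset.mem_insert.2 (Or.inr (mem_evens.2 ⟨m, le_refl m, by push_cast; ring⟩))
  · intro a ha
    rcases Finset.mem_insert.1 ha with h | h
    · subst h; constructor <;> [positivity; exact_mod_cast le_of_lt hqp]
    · obtain ⟨i, hi, rfl⟩ := mem_evens.1 h
      constructor <;> [positivity; (push_cast; omega)]
  · intro a ha ha0 hap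
    have key : ∀ b : ℤ, b ∈ evens m → b ≠ 0 → b ≠ (2*m:ℕ) →
        ∃ v ∈ insert (q:ℤ) (evens m), ∃ w ∈ insert (q:ℤ) (evens m), v ≠ w ∧ 2 * b = v + w := by
      intro b hb hb0 hbp
      obtain ⟨i, hi, rfl⟩ := mem_evens.1 hb
      have hi1 : 1 ≤ i := by
        rcases Nat.eq_zero_or_pos i with h | h
        · exfalso; apply hb0; rw [h]; norm_num
        · exact h
      have him : i < m := by
        rcases lt_or_eq_of_le hi with h | h
        · exact h
        · exfalso; apply hbp; rw [h]; push_cast; ring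
      refine ⟨2*((i:ℤ)-1), ?_, 2*((i:ℤ)+1), ?_, by linarith, by ring⟩
      · refine Finset.mem_insert.2 (Or.inr (mem_evens.2 ⟨i-1, by omega, ?_⟩))
        push_cast [Nat.cast_sub hi1]; ring
      · exact Finset.mem_insert.2 (Or.inr (mem_evens.2 ⟨i+1, by omega, by push_cast; ring⟩))
    rcases Finset.mem_insert.1 ha with h | h
    · subst h
      rcases Nat.even_or_odd q with ⟨j, hj⟩ | ⟨j, hj⟩
      · refine key _ (mem_evens.2 ⟨j, by omega, by push_cast [hj]; ring⟩) ha0 hap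
      · refine ⟨2*(j:ℤ), ?_, 2*((j:ℤ)+1), ?_, by linarith, by push_cast [hj]; ring⟩
        · exact Finset.mem_insert.2 (Or.inr (mem_evens.2 ⟨j, by omega, rfl⟩))
        · exact Finset.mem_insert.2 (Or.inr (mem_evens.2 ⟨j+1, by omega, by push_cast; ring⟩))
    · exact key _ h ha0 hap
  · refine le_trans (Finset.card_insert_le _ _) ?_
    have := evens_card m
    omega

lemma H_odd (m : ℕ) (hm : 1 ≤ m) (q : ℕ) (hq : 0 < q) (hqp : q < 2*m+1) :
    ∃ A : Finset ℤ, IsMediatedSeq 0 ((2*m+1 : ℕ) : ℤ) A ∧ (q:ℤ) ∈ A ∧ A.card ≤ m + 4 := by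
  set P : ℤ := ((2*m+1 : ℕ) : ℤ) with hP
  have hPv : P = 2*(m:ℤ)+1 := by rw [hP]; push_cast; ring
  set A : Finset ℤ := insert (q:ℤ) (insert (P-2) (insert P (evens m))) with hA
  have hmemE : ∀ i : ℕ, i ≤ m → (2*(i:ℤ)) ∈ A := by
    intro i hi
    simp only [hA, Finset.mem_insert]
    exact Or.inr (Or.inr (Or.inr (mem_evens.2 ⟨i, hi, rfl⟩)))
  have hPA : P ∈ A := by simp [hA]
  have hP2A : P - 2 ∈ A := by simp [hA]
  refine ⟨A, ⟨?_, hPA, ?_, ?_⟩, by simp [hA], ?_⟩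
  · have := hmemE 0 (by omega); simpa using this
  · intro a ha
    simp only [hA, Finset.mem_insert] at ha
    rcases ha with h | h | h | h
    · subst h; constructor <;> [positivity; (rw [hPv]; exact_mod_cast le_of_lt hqp)]
    · subst h; constructor <;> [(rw [hPv]; push_cast; omega); omega]
    · subst h; constructor <;> [(rw [hPv]; positivity); omega]
    · obtain ⟨i, hi, rfl⟩ := mem_evens.1 h
      constructor <;> [positivity; (rw [hPv]; push_cast; omega)]
  · intro a ha ha0 haP
    -- helper for even elements 2*i with 1 ≤ i ≤ m
    have key : ∀ i : ℕ, 1 ≤ i → i ≤ m →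
        ∃ v ∈ A, ∃ w ∈ A, v ≠ w ∧ 2 * (2*(i:ℤ)) = v + w := by
      intro i h1 h2
      rcases lt_or_eq_of_le h2 with h | h
      · refine ⟨2*((i:ℤ)-1), ?_, 2*((i:ℤ)+1), ?_, by linarith, by ring⟩
        · have := hmemE (i-1) (by omega)
          have hc : (2*(((i-1:ℕ)):ℤ)) = 2*((i:ℤ)-1) := by push_cast [Nat.cast_sub h1]; ring
          rwa [hc] at this
        · have := hmemE (i+1) (by omega)
          have hc : (2*(((i+1:ℕ)):ℤ)) = 2*((i:ℤ)+1) := by push_cast; ring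
          rwa [hc] at this
      · subst h
        refine ⟨P-2, hP2A, P, hPA, by omega, by rw [hPv]; ring⟩
    simp only [hA, Finset.mem_insert] at ha
    rcases ha with h | h | h | h
    · subst h
      rcases Nat.even_or_odd q with ⟨j, hj⟩ | ⟨j, hj⟩
      · have hj1 : 1 ≤ j := by omega
        have hjm : j ≤ m := by omega
        have hc : (q:ℤ) = 2*(j:ℤ) := by push_cast [hj]; ring
        rw [hc]; exact key j hj1 hjm
      · have hjm : j + 1 ≤ m := by omega
        refine ⟨2*(j:ℤ), hmemE j (by omega), 2*((j:ℤ)+1), ?_, by linarith, by push_cast [hj]; ring⟩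
        have := hmemE (j+1) hjm
        have hc : (2*(((j+1:ℕ)):ℤ)) = 2*((j:ℤ)+1) := by push_cast; ring
        rwa [hc] at this
    · subst h
      refine ⟨2*((m:ℤ)-1), ?_, 2*(m:ℤ), hmemE m (le_refl m), by linarith, by rw [hPv]; ring⟩
      have := hmemE (m-1) (by omega)
      have hc : (2*(((m-1:ℕ)):ℤ)) = 2*((m:ℤ)-1) := by push_cast [Nat.cast_sub hm]; ring
      rwa [hc] at this
    · exact absurd h haP
    · obtain ⟨i, hi, rfl⟩ := mem_evens.1 h
      have hi1 : 1 ≤ i := by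
        rcases Nat.eq_zero_or_pos i with h' | h'
        · exfalso; apply ha0; rw [h']; norm_num
        · exact h'
      exact key i hi1 hi
  · simp only [hA]
    refine le_trans (Finset.card_insert_le _ _) (Nat.succ_le_succ ?_)
    refine le_trans (Finset.card_insert_le _ _) (Nat.succ_le_succ ?_)
    refine le_trans (Finset.card_insert_le _ _) (Nat.succ_le_succ ?_)
    exact evens_card m

lemma dyadic_case (p q : ℕ) (hq : 0 < q) (hqp : q < p) (hp16 : 16 ≤ p) :
    ∃ A : Finset ℤ, IsMediatedSeq 0 (p : ℤ) A ∧ (q : ℤ) ∈ A ∧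
      (A.card : ℝ) < (1 / 2) * (Real.logb 2 (p : ℝ) + 3 / 2) ^ 2 := by
  set n := Nat.log 2 p with hn
  have hn4 : 4 ≤ n := (Nat.le_log_iff_pow_le (by norm_num) (by omega)).2 (show 2^4 ≤ p by omega)
  have h2n : 2^n ≤ p := Nat.pow_log_le_self 2 (by omega)
  have hlt : p < 2^(n+1) := Nat.lt_pow_succ_log_self (by norm_num) p
  have h2nZ : (2:ℤ)^n ≤ (p:ℤ) := by exact_mod_cast h2n
  have hltZ : (p:ℤ) < 2^(n+1) := by exact_mod_cast hlt
  have hpsZ : (2:ℤ)^(n+1) = 2^n + 2^n := by rw [pow_succ]; ring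
  have hpow0 : (0:ℤ) < 2^n := by positivity
  set P : ℤ := (p:ℤ) with hP
  set Q : ℤ := (q:ℤ) with hQ
  have hQ1 : 1 ≤ Q := by rw [hQ]; exact_mod_cast hq
  have hQP : Q < P := by rw [hQ, hP]; exact_mod_cast hqp
  set T : ℤ := P - 2^n with hT
  set U : ℤ := 2^n + 2^n - P with hU
  have hT0 : 0 ≤ T := by omega
  have hTlt : T < 2^n := by omega
  have hU0 : 0 < U := by omega
  have hUle : U ≤ 2^n := by omega
  -- choose the interval for q
  obtain ⟨L0, hL00, hL0Q, hQL0, hL0P, hL0or⟩ :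
      ∃ L0:ℤ, 0 ≤ L0 ∧ L0 ≤ Q ∧ Q ≤ L0 + 2^n ∧ L0 + 2^n ≤ P ∧ (L0 = 0 ∨ L0 = T) := by
    by_cases hc : Q ≤ 2^n
    · exact ⟨0, le_refl 0, by omega, by omega, by omega, Or.inl rfl⟩
    · exact ⟨T, hT0, by omega, by omega, by omega, Or.inr rfl⟩
  set A : Finset ℤ :=
    insert 0 (insert P (insert ((2:ℤ)^n)
      (mchain Q L0 n ∪ (mchain T 0 n ∪ mchain U 0 n)))) with hA
  have h0A : (0:ℤ) ∈ A := Finset.mem_insert_self _ _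
  have hPA : P ∈ A := by simp [hA]
  have h2A : (2:ℤ)^n ∈ A := by simp [hA]
  have hsubQ : mchain Q L0 n ⊆ A := by
    intro y hy; simp [hA, Finset.mem_insert, hy]
  have hsubT : mchain T 0 n ⊆ A := by
    intro y hy; simp [hA, Finset.mem_insert, hy]
  have hsubU : mchain U 0 n ⊆ A := by
    intro y hy; simp [hA, Finset.mem_insert, hy]
  have ins_sub : ∀ (L : ℤ) (C : Finset ℤ), C ⊆ A → L ∈ A → L + 2^n ∈ A →
      insert L (insert (L + 2^n) C) ⊆ A := by
    intro L C hC hL hLt y hy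
    rcases Finset.mem_insert.1 hy with h | h
    · exact h ▸ hL
    · rcases Finset.mem_insert.1 h with h' | h'
      · exact h' ▸ hLt
      · exact hC h'
  have hTA : T ∈ A := by
    refine ins_sub 0 (mchain T 0 n) hsubT h0A (by simpa using h2A) ?_
    exact mchain_mem T n 0 hT0 (by omega)
  have hUA : U ∈ A := by
    refine ins_sub 0 (mchain U 0 n) hsubU h0A (by simpa using h2A) ?_
    exact mchain_mem U n 0 (le_of_lt hU0) (by omega)
  have hL0A : L0 ∈ A := by rcases hL0or with h | h <;> rw [h] <;> [exact h0A; exact hTA]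
  have hL0tA : L0 + 2^n ∈ A := by
    rcases hL0or with h | h <;> rw [h]
    · simpa using h2A
    · have : T + 2^n = P := by omega
      rw [this]; exact hPA
  have hQsub : insert L0 (insert (L0 + 2^n) (mchain Q L0 n)) ⊆ A :=
    ins_sub L0 _ hsubQ hL0A hL0tA
  have hTsub : insert (0:ℤ) (insert (0 + 2^n) (mchain T 0 n)) ⊆ A :=
    ins_sub 0 _ hsubT h0A (by simpa using h2A)
  have hUsub : insert (0:ℤ) (insert (0 + 2^n) (mchain U 0 n)) ⊆ A :=
    ins_sub 0 _ hsubU h0A (by simpa using h2A)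
  refine ⟨A, ⟨h0A, hPA, ?_, ?_⟩, ?_, ?_⟩
  · -- bounds
    intro a ha
    simp only [hA, Finset.mem_insert, Finset.mem_union] at ha
    rcases ha with rfl | rfl | rfl | h | h | h
    · omega
    · omega
    · omega
    · have := mchain_lb Q n L0 a h; omega
    · have := mchain_lb T n 0 a h; omega
    · have := mchain_lb U n 0 a h; omega
  · -- mediation
    intro a ha ha0 haP
    simp only [hA, Finset.mem_insert, Finset.mem_union] at ha
    rcases ha with rfl | rfl | rfl | h | h | h
    · exact absurd rfl ha0
    · exact absurd rfl haP
    · -- a = 2^n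
      have hPgt : 2^n < P := lt_of_le_of_ne h2nZ haP
      exact ⟨U, hUA, P, hPA, by omega, by omega⟩
    · obtain ⟨v, hv, w, hw, hvw, heq⟩ := mchain_med Q n L0 a h
      exact ⟨v, hQsub hv, w, hQsub hw, hvw, heq⟩
    · obtain ⟨v, hv, w, hw, hvw, heq⟩ := mchain_med T n 0 a h
      exact ⟨v, hTsub hv, w, hTsub hw, hvw, heq⟩
    · obtain ⟨v, hv, w, hw, hvw, heq⟩ := mchain_med U n 0 a h
      exact ⟨v, hUsub hv, w, hUsub hw, hvw, heq⟩
  · -- q ∈ A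
    exact hQsub (mchain_mem Q n L0 hL0Q hQL0)
  · -- cardinality
    have hcard : A.card ≤ 3 * n + 3 := by
      have c1 := mchain_card Q n L0
      have c2 := mchain_card T n 0
      have c3 := mchain_card U n 0
      have i1 : A.card ≤ (insert P (insert ((2:ℤ)^n)
          (mchain Q L0 n ∪ (mchain T 0 n ∪ mchain U 0 n)))).card + 1 := Finset.card_insert_le _ _
      have i2 : (insert P (insert ((2:ℤ)^n)
          (mchain Q L0 n ∪ (mchain T 0 n ∪ mchain U 0 n)))).card ≤ (insert ((2:ℤ)^n)
          (mchain Q L0 n ∪ (mchain T 0 n ∪ mchain U 0 n))).card + 1 := Finset.card_insert_le _ _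
      have i3 : (insert ((2:ℤ)^n)
          (mchain Q L0 n ∪ (mchain T 0 n ∪ mchain U 0 n))).card ≤
          (mchain Q L0 n ∪ (mchain T 0 n ∪ mchain U 0 n)).card + 1 := Finset.card_insert_le _ _
      have hcu : (mchain Q L0 n ∪ (mchain T 0 n ∪ mchain U 0 n)).card ≤ 3 * n := by
        refine le_trans (Finset.card_union_le _ _) ?_
        have := Finset.card_union_le (mchain T 0 n) (mchain U 0 n)
        omega
      omega
    have hlog : (n:ℝ) ≤ Real.logb 2 (p:ℝ) := by
      have := logb_ge_helper p n 1 one_pos (by omega) (by simpa using h2n)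
      simpa using this
    have hcR : (A.card : ℝ) ≤ 3 * (n:ℝ) + 3 := by exact_mod_cast hcard
    have hnR : (4:ℝ) ≤ (n:ℝ) := by exact_mod_cast hn4
    nlinarith [mul_nonneg (sub_nonneg.2 hlog) (by linarith : (0:ℝ) ≤ Real.logb 2 (p:ℝ) + (n:ℝ) + 3)]

/-- For all natural numbers `p, q` with `0 < q < p`, there exists a
`(0,p)`-mediated sequence `A` containing `q` with `#A < (1/2)·(log₂ p + 3/2)²`. -/
theorem exists_mediated_seq_card_lt (p q : ℕ) (hq : 0 < q) (hqp : q < p) :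
    ∃ A : Finset ℤ, IsMediatedSeq 0 (p : ℤ) A ∧ (q : ℤ) ∈ A ∧
      (A.card : ℝ) < (1 / 2) * (Real.logb 2 (p : ℝ) + 3 / 2) ^ 2 := by
  by_cases hp16 : 16 ≤ p
  · exact dyadic_case p q hq hqp hp16
  · push_neg at hp16
    have hp2 : 2 ≤ p := by omega
    have heven : ∀ m : ℕ, 1 ≤ m → q < 2*m →
        ∃ A : Finset ℤ, IsMediatedSeq 0 ((2*m : ℕ) : ℤ) A ∧ (q:ℤ) ∈ A ∧ A.card ≤ m + 2 :=
      fun m hm hq2 => H_even m hm q hq hq2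
    have hodd : ∀ m : ℕ, 1 ≤ m → q < 2*m+1 →
        ∃ A : Finset ℤ, IsMediatedSeq 0 ((2*m+1 : ℕ) : ℤ) A ∧ (q:ℤ) ∈ A ∧ A.card ≤ m + 4 :=
      fun m hm hq2 => H_odd m hm q hq hq2
    interval_cases p
    · -- p = 2
      obtain ⟨A, hA, hqA, hcard⟩ := heven 1 (by norm_num) (by omega)
      exact ⟨A, by norm_num at hA ⊢; exact hA, hqA,
        close_case hcard one_pos (by norm_num) (show 2^1 ≤ 2^1 by norm_num) (by norm_num)⟩
    · -- p = 3 (special: {0,1,2,3})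
      refine ⟨{0,1,2,3}, by simp only [IsMediatedSeq]; decide, ?_, ?_⟩
      · have : q = 1 ∨ q = 2 := by omega
        rcases this with rfl | rfl <;> decide
      · exact close_case (show ({0,1,2,3} : Finset ℤ).card ≤ 4 by decide) (show 0 < 2 by norm_num)
          (by norm_num) (show 2^3 ≤ 3^2 by norm_num) (by norm_num)
    · -- p = 4
      obtain ⟨A, hA, hqA, hcard⟩ := heven 2 (by norm_num) (by omega)
      exact ⟨A, by norm_num at hA ⊢; exact hA, hqA,
        close_case hcard one_pos (by norm_num) (show 2^2 ≤ 4^1 by norm_num) (by norm_num)⟩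
    · -- p = 5
      obtain ⟨A, hA, hqA, hcard⟩ := hodd 2 (by norm_num) (by omega)
      exact ⟨A, by norm_num at hA ⊢; exact hA, hqA,
        close_case hcard one_pos (by norm_num) (show 2^2 ≤ 5^1 by norm_num) (by norm_num)⟩
    · -- p = 6
      obtain ⟨A, hA, hqA, hcard⟩ := heven 3 (by norm_num) (by omega)
      exact ⟨A, by norm_num at hA ⊢; exact hA, hqA,
        close_case hcard one_pos (by norm_num) (show 2^2 ≤ 6^1 by norm_num) (by norm_num)⟩
    · -- p = 7
      obtain ⟨A, hA, hqA, hcard⟩ := hodd 3 (by norm_num) (by omega)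
      exact ⟨A, by norm_num at hA ⊢; exact hA, hqA,
        close_case hcard (show 0 < 4 by norm_num) (by norm_num) (show 2^9 ≤ 7^4 by norm_num) (by norm_num)⟩
    · -- p = 8
      obtain ⟨A, hA, hqA, hcard⟩ := heven 4 (by norm_num) (by omega)
      exact ⟨A, by norm_num at hA ⊢; exact hA, hqA,
        close_case hcard one_pos (by norm_num) (show 2^3 ≤ 8^1 by norm_num) (by norm_num)⟩
    · -- p = 9
      obtain ⟨A, hA, hqA, hcard⟩ := hodd 4 (by norm_num) (by omega)
      exact ⟨A, by norm_num at hA ⊢; exact hA, hqA,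
        close_case hcard one_pos (by norm_num) (show 2^3 ≤ 9^1 by norm_num) (by norm_num)⟩
    · -- p = 10
      obtain ⟨A, hA, hqA, hcard⟩ := heven 5 (by norm_num) (by omega)
      exact ⟨A, by norm_num at hA ⊢; exact hA, hqA,
        close_case hcard one_pos (by norm_num) (show 2^3 ≤ 10^1 by norm_num) (by norm_num)⟩
    · -- p = 11
      obtain ⟨A, hA, hqA, hcard⟩ := hodd 5 (by norm_num) (by omega)
      exact ⟨A, by norm_num at hA ⊢; exact hA, hqA,
        close_case hcard one_pos (by norm_num) (show 2^3 ≤ 11^1 by norm_num) (by norm_num)⟩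
    · -- p = 12
      obtain ⟨A, hA, hqA, hcard⟩ := heven 6 (by norm_num) (by omega)
      exact ⟨A, by norm_num at hA ⊢; exact hA, hqA,
        close_case hcard one_pos (by norm_num) (show 2^3 ≤ 12^1 by norm_num) (by norm_num)⟩
    · -- p = 13
      obtain ⟨A, hA, hqA, hcard⟩ := hodd 6 (by norm_num) (by omega)
      exact ⟨A, by norm_num at hA ⊢; exact hA, hqA,
        close_case hcard one_pos (by norm_num) (show 2^3 ≤ 13^1 by norm_num) (by norm_num)⟩
    · -- p = 14
      obtain ⟨A, hA, hqA, hcard⟩ := heven 7 (by norm_num) (by omega)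
      exact ⟨A, by norm_num at hA ⊢; exact hA, hqA,
        close_case hcard one_pos (by norm_num) (show 2^3 ≤ 14^1 by norm_num) (by norm_num)⟩
    · -- p = 15
      obtain ⟨A, hA, hqA, hcard⟩ := hodd 7 (by norm_num) (by omega)
      exact ⟨A, by norm_num at hA ⊢; exact hA, hqA,
        close_case hcard (show 0 < 4 by norm_num) (by norm_num) (show 2^13 ≤ 15^4 by norm_num) (by norm_num)⟩
end

section
/- For every integer p ≥ 2, the minimum cardinality of a (0,p)-mediated sequence containing 1 equals ⌈log₂(p)⌉ + 2. -/
private def medc (p : ℕ) : ℕ → ℕ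
  | 0 => p
  | i + 1 => (medc p i + 1) / 2

private lemma medc_one_le (p : ℕ) (hp : 1 ≤ p) : ∀ i, 1 ≤ medc p i := by
  intro i; induction i with
  | zero => simpa [medc]
  | succ j ih => simp only [medc]; omega

private lemma medc_lower (p : ℕ) : ∀ i, 2 ^ i * medc p i < p + 2 ^ i := by
  intro i; induction i with
  | zero => simp [medc]
  | succ j ih =>
    have : 2 ^ (j+1) * medc p (j+1) ≤ 2 ^ j * (medc p j + 1) := by
      have h2 : 2 * ((medc p j + 1) / 2) ≤ medc p j + 1 := by omega
      calc 2 ^ (j+1) * medc p (j+1) = 2 ^ j * (2 * ((medc p j + 1) / 2)) := by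
            simp [medc, pow_succ]; ring
        _ ≤ 2 ^ j * (medc p j + 1) := Nat.mul_le_mul_left _ h2
    have h3 : 2 ^ j * (medc p j + 1) = 2 ^ j * medc p j + 2 ^ j := by ring
    have := ih
    have hpow : (2:ℕ) ^ (j+1) = 2 ^ j + 2 ^ j := by rw [pow_succ]; ring
    omega

private lemma medc_upper (p : ℕ) : ∀ i, p ≤ 2 ^ i * medc p i := by
  intro i; induction i with
  | zero => simp [medc]
  | succ j ih =>
    have h2 : medc p j ≤ 2 * ((medc p j + 1) / 2) := by omega
    calc p ≤ 2 ^ j * medc p j := ih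
      _ ≤ 2 ^ j * (2 * ((medc p j + 1) / 2)) := Nat.mul_le_mul_left _ h2
      _ = 2 ^ (j+1) * medc p (j+1) := by simp [medc, pow_succ]; ring

private lemma medc_anti (p : ℕ) (hp : 1 ≤ p) : ∀ i j, i ≤ j → medc p j ≤ medc p i := by
  intro i j hij
  induction j with
  | zero => have : i = 0 := by omega
            simp [this]
  | succ m ih =>
    rcases Nat.lt_or_ge i (m+1) with h | h
    · have := ih (by omega)
      have h1 := medc_one_le p hp m
      have : medc p (m+1) ≤ medc p m := by simp only [medc]; omega
      omega
    · have : i = m + 1 := by omega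
      simp [this]

/-- key facts when `k = Nat.clog 2 p` -/
private lemma medc_eq_one (p k : ℕ) (hpk : p ≤ 2 ^ k) (hp : 1 ≤ p) : medc p k = 1 := by
  have h1 := medc_one_le p hp k
  have h2 := medc_lower p k
  have hpos : 0 < 2 ^ k := Nat.pow_pos (by norm_num)
  nlinarith [medc_lower p k]

private lemma medc_ge_two (p k : ℕ) (hp : 2 ≤ p) (hk : 2 ^ (k-1) < p) :
    ∀ i, i < k → 2 ≤ medc p i := by
  intro i hik
  by_contra h
  have h1 := medc_one_le p (by omega) i
  have he : medc p i = 1 := by omega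
  have hup := medc_upper p i
  rw [he, mul_one] at hup
  have hle : (2:ℕ) ^ i ≤ 2 ^ (k-1) := Nat.pow_le_pow_right (by norm_num) (by omega)
  omega

private lemma medc_strict (p k : ℕ) (hp : 2 ≤ p) (hk : 2 ^ (k-1) < p) :
    ∀ i j, i < j → j ≤ k → medc p j < medc p i := by
  intro i j hij hjk
  have h2 := medc_ge_two p k hp hk i (by omega)
  have hstep : medc p (i+1) < medc p i := by simp only [medc]; omega
  have := medc_anti p (by omega) (i+1) j (by omega)
  omega

/-- Lower bound lemma: in a (0,q)-mediated set containing 1, every positive element `a`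
satisfies `4a ≤ 2 ^ #(elements ≤ a)`. -/
private lemma mediated_lower (q : ℤ) (A : Finset ℤ) (hA : IsMediatedSeq 0 q A)
    (h1 : (1:ℤ) ∈ A) :
    ∀ n : ℕ, ∀ a ∈ A, 0 < a → a ≤ (n:ℤ) → 4 * a ≤ 2 ^ (A.filter (fun x => x ≤ a)).card := by
  obtain ⟨h0, hq, hbd, hmed⟩ := hA
  intro n
  induction n with
  | zero => intro a _ h1 h2; omega
  | succ n ih =>
    intro a ha hapos han
    rcases eq_or_lt_of_le (by omega : (1:ℤ) ≤ a) with rfl | ha1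
    · -- a = 1
      have hsub : ({0, 1} : Finset ℤ) ⊆ A.filter (fun x => x ≤ 1) := by
        intro x hx
        simp only [Finset.mem_insert, Finset.mem_singleton] at hx
        rcases hx with rfl | rfl <;> simp [Finset.mem_filter, h0, h1]
      have hcard : 2 ≤ (A.filter (fun x => x ≤ 1)).card := by
        have := Finset.card_le_card hsub
        simpa using this
      calc (4:ℤ) * 1 = 2 ^ 2 := by norm_num
        _ ≤ 2 ^ (A.filter (fun x => x ≤ (1:ℤ))).card := by
            apply pow_le_pow_right₀ (by norm_num) hcard
    · -- a ≥ 2; take the predecessor b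
      set S := A.filter (fun x => x < a) with hS
      have hSne : S.Nonempty := ⟨1, by simp [hS, Finset.mem_filter, h1, ha1]⟩
      set b := S.max' hSne with hb
      have hbS : b ∈ S := S.max'_mem hSne
      have hbA : b ∈ A := (Finset.mem_filter.mp hbS).1
      have hba : b < a := (Finset.mem_filter.mp hbS).2
      have hb1 : (1:ℤ) ≤ b := S.le_max' 1 (by simp [hS, Finset.mem_filter, h1, ha1])
      have hbmax : ∀ x ∈ A, x < a → x ≤ b := fun x hx hxa =>
        S.le_max' x (by simp [hS, Finset.mem_filter, hx, hxa])
      have haq : a ≤ q := (hbd a ha).2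
      obtain ⟨v, hv, w, hw, hvw, heq⟩ := hmed b hbA (by omega) (by omega)
      -- let w' be the larger witness
      have key : a ≤ 2 * b := by
        rcases le_total v w with hle | hle
        · have hwgt : b < w := by omega
          have hwa : a ≤ w := by
            by_contra hcon
            have := hbmax w hw (by omega)
            omega
          have hv0 : 0 ≤ v := (hbd v hv).1
          omega
        · have hwgt : b < v := by omega
          have hwa : a ≤ v := by
            by_contra hcon
            have := hbmax v hv (by omega)
            omega
          have hw0 : 0 ≤ w := (hbd w hw).1
          omega
      have hbn : b ≤ (n:ℤ) := by push_cast at han ⊢; omega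
      have hIH := ih b hbA (by omega) hbn
      have hsub : insert a (A.filter (fun x => x ≤ b)) ⊆ A.filter (fun x => x ≤ a) := by
        intro x hx
        rcases Finset.mem_insert.mp hx with rfl | hx'
        · simp [Finset.mem_filter, ha]
        · rw [Finset.mem_filter] at hx' ⊢
          exact ⟨hx'.1, by omega⟩
      have hnotmem : a ∉ A.filter (fun x => x ≤ b) := by
        simp only [Finset.mem_filter]; push_neg; intro _; omega
      have hcard : (A.filter (fun x => x ≤ b)).card + 1 ≤ (A.filter (fun x => x ≤ a)).card := by
        have := Finset.card_le_card hsub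
        rwa [Finset.card_insert_of_notMem hnotmem] at this
      calc 4 * a ≤ 2 * (4 * b) := by omega
        _ ≤ 2 * 2 ^ (A.filter (fun x => x ≤ b)).card := by omega
        _ = 2 ^ ((A.filter (fun x => x ≤ b)).card + 1) := by rw [pow_succ]; ring
        _ ≤ 2 ^ (A.filter (fun x => x ≤ a)).card :=
            pow_le_pow_right₀ (by norm_num) hcard

/-- For every integer `p ≥ 2`, the minimum cardinality of a `(0,p)`-mediated
sequence containing `1` equals `⌈log₂ p⌉ + 2`. -/
theorem minimal_mediated_seq_card (p : ℕ) (hp : 2 ≤ p) :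
    IsLeast {k : ℕ | ∃ A : Finset ℤ, IsMediatedSeq 0 (p : ℤ) A ∧ (1 : ℤ) ∈ A ∧ A.card = k}
      (⌈Real.logb 2 (p : ℝ)⌉₊ + 2) := by
  have hceil : ⌈Real.logb 2 (p : ℝ)⌉₊ = Nat.clog 2 p := by
    rw [← Int.ceil_toNat, show ((2:ℝ)) = ((2:ℕ):ℝ) by norm_num,
      Real.ceil_logb_natCast (by positivity), Int.clog_natCast, Int.toNat_natCast]
  set k := Nat.clog 2 p with hk
  have hpk : p ≤ 2 ^ k := Nat.le_pow_clog (by norm_num) p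
  have hk1 : 1 ≤ k := by
    by_contra h
    have : k = 0 := by omega
    rw [this] at hpk; simp at hpk; omega
  have hkpred : 2 ^ (k - 1) < p := Nat.pow_pred_clog_lt_self (by norm_num) (by omega)
  rw [hceil]
  constructor
  · -- membership : construct A
    set A : Finset ℤ :=
      insert 0 ((Finset.range (k+1)).image fun i => ((medc p i : ℤ))) with hA
    have hmem : ∀ i, i ≤ k → ((medc p i : ℤ)) ∈ A := by
      intro i hi
      rw [hA]
      exact Finset.mem_insert_of_mem (Finset.mem_image.mpr ⟨i, Finset.mem_range.mpr (by omega), rfl⟩)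
    have hm0 : medc p 0 = p := rfl
    have hmk : medc p k = 1 := medc_eq_one p k hpk (by omega)
    have h0A : (0:ℤ) ∈ A := Finset.mem_insert_self _ _
    have hpA : (p:ℤ) ∈ A := by have := hmem 0 (by omega); rwa [hm0] at this
    have h1A : (1:ℤ) ∈ A := by have := hmem k le_rfl; rwa [hmk] at this
    refine ⟨A, ⟨h0A, hpA, ?_, ?_⟩, h1A, ?_⟩
    · -- bounds
      intro a haA
      rw [hA, Finset.mem_insert] at haA
      rcases haA with rfl | haA
      · constructor <;> [rfl; positivity]
      · obtain ⟨i, hi, rfl⟩ := Finset.mem_image.mp haA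
        refine ⟨by positivity, ?_⟩
        have := medc_anti p (by omega) 0 i (by omega)
        rw [hm0] at this
        exact_mod_cast this
    · -- mediation
      intro a haA ha0 hap
      rw [hA, Finset.mem_insert] at haA
      rcases haA with rfl | haA
      · exact absurd rfl ha0
      obtain ⟨i, hi, rfl⟩ := Finset.mem_image.mp haA
      rw [Finset.mem_range] at hi
      obtain ⟨j, rfl⟩ : ∃ j, i = j + 1 := by
        rcases i with _ | j
        · exfalso; apply hap; rw [hm0]
        · exact ⟨j, rfl⟩
      have hjk : j < k := by omega
      have hbj : 2 ≤ medc p j := medc_ge_two p k hp hkpred j hjk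
      have hdef : medc p (j+1) = (medc p j + 1) / 2 := rfl
      have hcase : 2 * medc p (j+1) = medc p j ∨ 2 * medc p (j+1) = medc p j + 1 := by omega
      rcases hcase with hc | hc
      · refine ⟨(medc p j : ℤ), hmem j (by omega), 0, h0A, ?_, ?_⟩
        · have : 2 ≤ medc p j := hbj; exact_mod_cast (by omega : (medc p j : ℤ) ≠ 0)
        · push_cast [← hc]; ring
      · refine ⟨(medc p j : ℤ), hmem j (by omega), 1, h1A, ?_, ?_⟩
        · have : (3:ℕ) ≤ medc p j := by omega
          exact_mod_cast (by omega : (medc p j : ℤ) ≠ 1)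
        · omega
    · -- cardinality
      have hinj : Set.InjOn (fun i => ((medc p i : ℤ))) (Finset.range (k+1)) := by
        intro i hi j hj hij
        simp only [Finset.coe_range, Set.mem_Iio] at hi hj
        by_contra hne
        have hij' : medc p i = medc p j := Nat.cast_injective (R := ℤ) hij
        rcases Nat.lt_or_ge i j with h | h
        · have := medc_strict p k hp hkpred i j h (by omega)
          omega
        · have := medc_strict p k hp hkpred j i (by omega) (by omega)
          omega
      have hcardim : ((Finset.range (k+1)).image fun i => ((medc p i : ℤ))).card = k + 1 := by
        rw [Finset.card_image_of_injOn hinj, Finset.card_range]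
      have h0not : (0:ℤ) ∉ (Finset.range (k+1)).image fun i => ((medc p i : ℤ)) := by
        intro h
        obtain ⟨i, hi, hEq⟩ := Finset.mem_image.mp h
        have := medc_one_le p (by omega) i
        omega
      rw [hA, Finset.card_insert_of_notMem h0not, hcardim]
  · -- lower bound
    rintro m ⟨A, hA, h1A, rfl⟩
    have hbig := mediated_lower (p:ℤ) A hA h1A p (p:ℤ) hA.2.1 (by exact_mod_cast (by omega : (0:ℤ) < p)) le_rfl
    have hfA : A.filter (fun x => x ≤ (p:ℤ)) = A := by
      apply Finset.filter_true_of_mem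
      intro x hx
      exact (hA.2.2.1 x hx).2
    rw [hfA] at hbig
    have hnat : 4 * p ≤ 2 ^ A.card := by exact_mod_cast hbig
    have hcard3 : 3 ≤ A.card := by
      by_contra h
      have h2 : A.card ≤ 2 := by omega
      have : (2:ℕ) ^ A.card ≤ 2 ^ 2 := Nat.pow_le_pow_right (by norm_num) h2
      omega
    have hple : p ≤ 2 ^ (A.card - 2) := by
      have h4 : (2:ℕ) ^ A.card = 4 * 2 ^ (A.card - 2) := by
        have hc : A.card = (A.card - 2) + 2 := by omega
        calc (2:ℕ) ^ A.card = 2 ^ ((A.card - 2) + 2) := by rw [← hc]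
          _ = 4 * 2 ^ (A.card - 2) := by rw [pow_add]; ring
      omega
    have := (Nat.clog_le_iff_le_pow (by norm_num)).mpr hple
    omega
end

section
/- Let α₁ ≠ α₂ be two points of ℚⁿ and let β = (1 − q/p)·α₁ + (q/p)·α₂ where p, q ∈ ℕ, 0 < q < p and gcd(p,q) = 1. Then there exists an {α₁,α₂}-rational mediated set M containing β whose cardinality satisfies #M < (1/2)·(log₂(p) + 3/2)². -/
namespace RMS

/-- weight: number of ones in binary expansion -/
def wt (n : ℕ) : ℕ := (Nat.digits 2 n).sum

lemma wt_zero : wt 0 = 0 := by simp [wt]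

lemma wt_eq (n : ℕ) : wt n = n % 2 + wt (n / 2) := by
  rcases Nat.eq_zero_or_pos n with h | h
  · simp [h, wt]
  · unfold wt
    rw [Nat.digits_def' (by norm_num) h]
    simp

lemma wt_pow_add {k s : ℕ} (hs : s < 2 ^ k) : wt (2 ^ k + s) = wt s + 1 := by
  induction k generalizing s with
  | zero =>
    interval_cases s
    simp [wt]
  | succ k ih =>
    have h1 : (2 ^ (k+1) + s) % 2 = s % 2 := by
      omega
    have h2 : (2 ^ (k+1) + s) / 2 = 2 ^ k + s / 2 := by
      omega
    rw [wt_eq (2 ^ (k+1) + s), h1, h2, ih (by omega), wt_eq s]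
    ring

lemma wt_le {k s : ℕ} (hs : s < 2 ^ k) : wt s ≤ k := by
  induction s using Nat.strong_induction_on generalizing k with
  | _ s IH =>
    rcases Nat.eq_zero_or_pos s with h | h
    · simp [h, wt_zero]
    · set L := Nat.log 2 s with hL
      have hpow : 2 ^ L ≤ s := Nat.pow_log_le_self 2 h.ne'
      have hlt : s < 2 ^ (L + 1) := Nat.lt_pow_succ_log_self (by norm_num) s
      have hLk : L < k := Nat.log_lt_of_lt_pow h.ne' hs
      have hdecomp : s = 2 ^ L + (s - 2 ^ L) := by omega
      have hs' : s - 2 ^ L < 2 ^ L := by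
        have : 2 ^ (L+1) = 2 * 2 ^ L := by ring
        omega
      have := wt_pow_add hs'
      rw [hdecomp, this]
      have hrec : wt (s - 2 ^ L) ≤ L := by
        rcases Nat.eq_zero_or_pos (s - 2 ^ L) with h0 | h0
        · simp [h0, wt_zero]
        · exact IH (s - 2 ^ L) (by omega) hs'
      omega

lemma wt_pos {n : ℕ} (hn : 0 < n) : 1 ≤ wt n := by
  set L := Nat.log 2 n with hL
  have hpow : 2 ^ L ≤ n := Nat.pow_log_le_self 2 hn.ne'
  have hlt : n < 2 ^ (L + 1) := Nat.lt_pow_succ_log_self (by norm_num) n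
  have hs' : n - 2 ^ L < 2 ^ L := by
    have : 2 ^ (L+1) = 2 * 2 ^ L := by ring
    omega
  have hdecomp : n = 2 ^ L + (n - 2 ^ L) := by omega
  rw [hdecomp, wt_pow_add hs']
  omega

/-- successor in the strip-top-bit chain -/
def nxt (c : ℕ) : ℕ := 2 * c - 2 ^ (Nat.log 2 c + 1)

lemma nxt_lt {c : ℕ} (hc : 0 < c) : nxt c < c := by
  have hlt : c < 2 ^ (Nat.log 2 c + 1) := Nat.lt_pow_succ_log_self (by norm_num) c
  unfold nxt
  omega

lemma nxt_sum {c : ℕ} (hc : 0 < c) : 2 ^ (Nat.log 2 c + 1) + nxt c = 2 * c := by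
  have hpow : 2 ^ Nat.log 2 c ≤ c := Nat.pow_log_le_self 2 hc.ne'
  have : 2 ^ (Nat.log 2 c + 1) = 2 * 2 ^ (Nat.log 2 c) := by ring
  unfold nxt
  omega

/-- the chain finset -/
def chn : ℕ → Finset ℕ
  | 0 => ∅
  | (c+1) => insert (c+1) (chn (nxt (c+1)))
  decreasing_by exact nxt_lt (Nat.succ_pos c)

lemma chn_zero : chn 0 = ∅ := by simp [chn]

lemma chn_eq {c : ℕ} (hc : 0 < c) : chn c = insert c (chn (nxt c)) := by
  rcases c with _ | c
  · omega
  · simp [chn]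

lemma mem_chn_self {c : ℕ} (hc : 0 < c) : c ∈ chn c := by
  rw [chn_eq hc]; exact Finset.mem_insert_self _ _

lemma chn_bounds : ∀ t, ∀ e ∈ chn t, 1 ≤ e ∧ e ≤ t := by
  intro t
  induction t using Nat.strong_induction_on with
  | _ t IH =>
    intro e he
    rcases Nat.eq_zero_or_pos t with h | h
    · rw [h, chn_zero] at he; exact absurd he (Finset.notMem_empty e)
    · rw [chn_eq h] at he
      rcases Finset.mem_insert.mp he with rfl | he'
      · exact ⟨h, le_refl _⟩
      · have := IH (nxt t) (nxt_lt h) e he'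
        exact ⟨this.1, le_trans this.2 (le_of_lt (nxt_lt h))⟩

lemma chn_subset : ∀ t, ∀ e ∈ chn t, chn e ⊆ chn t := by
  intro t
  induction t using Nat.strong_induction_on with
  | _ t IH =>
    intro e he
    rcases Nat.eq_zero_or_pos t with h | h
    · rw [h, chn_zero] at he; exact absurd he (Finset.notMem_empty e)
    · rw [chn_eq h] at he
      rcases Finset.mem_insert.mp he with rfl | he'
      · exact subset_refl _
      · exact (IH (nxt t) (nxt_lt h) e he').trans
          (by rw [chn_eq h]; exact Finset.subset_insert _ _)

lemma nxt_mem_chn {t c : ℕ} (hc : c ∈ chn t) : nxt c = 0 ∨ nxt c ∈ chn t := by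
  have hc1 : 0 < c := (chn_bounds t c hc).1
  rcases Nat.eq_zero_or_pos (nxt c) with h | h
  · exact Or.inl h
  · right
    have h1 : nxt c ∈ chn c := by
      rw [chn_eq hc1]
      exact Finset.mem_insert_of_mem (mem_chn_self h)
    exact chn_subset t c hc h1

lemma chn_card_le : ∀ t, (chn t).card ≤ wt t := by
  intro t
  induction t using Nat.strong_induction_on with
  | _ t IH =>
    rcases Nat.eq_zero_or_pos t with h | h
    · simp [h, chn_zero, wt_zero]
    · rw [chn_eq h]
      have h1 : (insert t (chn (nxt t))).card ≤ (chn (nxt t)).card + 1 :=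
        Finset.card_insert_le _ _
      have h2 : (chn (nxt t)).card ≤ wt (nxt t) := IH (nxt t) (nxt_lt h)
      -- wt t = wt (nxt t) + 1  (or nxt t = 0 and wt t = 1)
      have hpow : 2 ^ Nat.log 2 t ≤ t := Nat.pow_log_le_self 2 h.ne'
      have hlt : t < 2 ^ (Nat.log 2 t + 1) := Nat.lt_pow_succ_log_self (by norm_num) t
      have hp2 : 2 ^ (Nat.log 2 t + 1) = 2 * 2 ^ Nat.log 2 t := by ring
      set L := Nat.log 2 t with hL
      have hnxt2 : nxt t = 2 * (t - 2 ^ L) := by unfold nxt; rw [← hL]; omega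
      have hs' : t - 2 ^ L < 2 ^ L := by omega
      have hwt : wt t = wt (t - 2 ^ L) + 1 := by
        have hd : t = 2 ^ L + (t - 2 ^ L) := by omega
        calc wt t = wt (2 ^ L + (t - 2 ^ L)) := by rw [← hd]
        _ = wt (t - 2 ^ L) + 1 := wt_pow_add hs'
      have hwnxt : wt (nxt t) = wt (t - 2 ^ L) := by
        rw [hnxt2]
        rcases Nat.eq_zero_or_pos (t - 2 ^ L) with h0 | h0
        · rw [h0]
        · rw [wt_eq (2 * (t - 2 ^ L))]
          have h2a : 2 * (t - 2 ^ L) % 2 = 0 := by omega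
          have h2b : 2 * (t - 2 ^ L) / 2 = t - 2 ^ L := by omega
          rw [h2a, h2b]
          omega
      omega

lemma chn_exists_pow : ∀ t, 0 < t → ∃ e ∈ chn t, ∃ j, e = 2 ^ j := by
  intro t
  induction t using Nat.strong_induction_on with
  | _ t IH =>
    intro ht
    rcases Nat.eq_zero_or_pos (nxt t) with h | h
    · -- t is a power of 2
      refine ⟨t, mem_chn_self ht, Nat.log 2 t, ?_⟩
      have hpow : 2 ^ Nat.log 2 t ≤ t := Nat.pow_log_le_self 2 ht.ne'
      have := nxt_sum ht
      omega
    · obtain ⟨e, he, j, hj⟩ := IH (nxt t) (nxt_lt ht) h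
      refine ⟨e, ?_, j, hj⟩
      have : chn (nxt t) ⊆ chn t := by
        rw [chn_eq ht]; exact Finset.subset_insert _ _
      exact this he


/-- mediated-set predicate over ℚ with anchors 0, 1 -/
def medQ (T : Finset ℚ) : Prop :=
  ∀ u ∈ T, u ≠ 0 → u ≠ 1 → ∃ v ∈ T, ∃ w ∈ T, v ≠ w ∧ u = (v + w) / 2

lemma medQ_reflect {T : Finset ℚ} (hT : medQ T) :
    medQ (T.image (fun x => 1 - x)) := by
  intro u hu h0 h1
  obtain ⟨u', hu', rfl⟩ := Finset.mem_image.mp hu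
  have hu'0 : u' ≠ 0 := by intro h; rw [h] at h1; simp at h1
  have hu'1 : u' ≠ 1 := by intro h; rw [h] at h0; simp at h0
  obtain ⟨v, hv, w, hw, hvw, heq⟩ := hT u' hu' hu'0 hu'1
  refine ⟨1 - v, Finset.mem_image_of_mem _ hv, 1 - w, Finset.mem_image_of_mem _ hw, ?_, ?_⟩
  · intro h
    apply hvw
    have : v = w := by linarith [(sub_right_injective.eq_iff (a := v) (b := w)).mp h]
    exact this
  · rw [heq]; ring

lemma medQ_insert_half {T : Finset ℚ} (hT : medQ T) (x' : ℚ) (hx' : x' ∈ T)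
    (hx0 : x' ≠ 0) (hx1 : x' ≠ 1) (ε : ℚ) (hε : ε = 0 ∨ ε = 1)
    (h0T : (0:ℚ) ∈ T) (h1T : (1:ℚ) ∈ T) :
    medQ (insert ((x' + ε)/2) T) := by
  intro u hu hu0 hu1
  rcases Finset.mem_insert.mp hu with rfl | huT
  · refine ⟨x', Finset.mem_insert_of_mem hx', ε, ?_, ?_, by ring⟩
    · rcases hε with rfl | rfl
      · exact Finset.mem_insert_of_mem h0T
      · exact Finset.mem_insert_of_mem h1T
    · rcases hε with rfl | rfl
      · exact hx0
      · exact hx1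
  · obtain ⟨v, hv, w, hw, hvw, heq⟩ := hT u huT hu0 hu1
    exact ⟨v, Finset.mem_insert_of_mem hv, w, Finset.mem_insert_of_mem hw, hvw, heq⟩

/-- The odd core construction, for 2c < v. -/
lemma odd_core_half (v : ℕ) (hv3 : 3 ≤ v) (hodd : v % 2 = 1) (c : ℕ) (hc : 0 < c)
    (hcv : 2 * c < v) :
    ∃ T : Finset ℚ, medQ T ∧ (0:ℚ) ∈ T ∧ (1:ℚ) ∈ T ∧ ((c:ℚ)/(v:ℚ)) ∈ T ∧
      T.card ≤ 3 * Nat.log 2 v + 1 := by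
  have hv0 : 0 < v := by omega
  have hvQ : (0:ℚ) < (v:ℚ) := by exact_mod_cast hv0
  set m := Nat.log 2 v with hm
  have hm1 : 1 ≤ m := Nat.le_log_of_pow_le (by norm_num) (by omega)
  have hpowle : 2 ^ m ≤ v := Nat.pow_log_le_self 2 (by omega)
  have hvlt : v < 2 ^ (m + 1) := Nat.lt_pow_succ_log_self (by norm_num) v
  have hp2 : 2 ^ (m + 1) = 2 * 2 ^ m := by ring
  have hppow : 2 ^ m < v := by
    rcases Nat.lt_or_ge (2 ^ m) v with h | h
    · exact h
    · exfalso
      have hveq : v = 2 ^ m := by omega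
      have : 2 ^ m % 2 = 0 := by
        have : 2 ^ m = 2 * 2 ^ (m - 1) := by
          rw [← pow_succ']
          congr 1
          omega
        omega
      omega
  set r := 2 ^ (m + 1) - v with hr
  have hr1 : 1 ≤ r := by omega
  have hrlt : r < 2 ^ m := by omega
  have hclt : c < 2 ^ m := by omega
  set P := (Finset.range (m+1)).image (fun j => 2 ^ j) with hP
  set N := P ∪ chn r ∪ chn c with hN
  set T := insert (0:ℚ) (insert (1:ℚ) (N.image (fun k : ℕ => (k:ℚ)/(v:ℚ)))) with hT
  have h0T : (0:ℚ) ∈ T := Finset.mem_insert_self _ _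
  have h1T : (1:ℚ) ∈ T := Finset.mem_insert_of_mem (Finset.mem_insert_self _ _)
  have memT : ∀ k : ℕ, k ∈ N → ((k:ℚ)/(v:ℚ)) ∈ T := by
    intro k hk
    exact Finset.mem_insert_of_mem (Finset.mem_insert_of_mem
      (Finset.mem_image_of_mem _ hk))
  have hNbounds : ∀ k ∈ N, 1 ≤ k ∧ k ≤ 2 ^ m := by
    intro k hk
    rcases Finset.mem_union.mp hk with hk' | hk'
    · rcases Finset.mem_union.mp hk' with hk'' | hk''
      · obtain ⟨j, hj, rfl⟩ := Finset.mem_image.mp hk''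
        have hj' : j ≤ m := by
          have := Finset.mem_range.mp hj
          omega
        exact ⟨Nat.one_le_two_pow, Nat.pow_le_pow_right (by norm_num) hj'⟩
      · have := chn_bounds r k hk''
        omega
    · have := chn_bounds c k hk'
      omega
  have hrN : r ∈ N := by
    apply Finset.mem_union_left
    apply Finset.mem_union_right
    exact mem_chn_self hr1
  have hcN : c ∈ N := by
    apply Finset.mem_union_right
    exact mem_chn_self hc
  refine ⟨T, ?_, h0T, h1T, memT c hcN, ?_⟩
  · -- medQ
    intro u hu hu0 hu1
    rcases Finset.mem_insert.mp hu with rfl | hu'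
    · exact absurd rfl hu0
    rcases Finset.mem_insert.mp hu' with rfl | hu''
    · exact absurd rfl hu1
    obtain ⟨k, hkN, rfl⟩ := Finset.mem_image.mp hu''
    obtain ⟨hk1, hkle⟩ := hNbounds k hkN
    by_cases hktop : k = 2 ^ m
    · -- witnesses 1 and r/v
      refine ⟨1, h1T, (r:ℚ)/(v:ℚ), memT r hrN, ?_, ?_⟩
      · intro h
        have : (r:ℚ)/(v:ℚ) < 1 := by
          rw [div_lt_one hvQ]
          exact_mod_cast (by omega : r < v)
        rw [← h] at this
        exact lt_irrefl _ this
      · have hsum : v + r = 2 * k := by omega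
        have hvne : (v:ℚ) ≠ 0 := ne_of_gt hvQ
        have hsumQ : (v:ℚ) + (r:ℚ) = 2 * (k:ℚ) := by exact_mod_cast hsum
        have h1 : (1:ℚ) + (r:ℚ)/(v:ℚ) = ((v:ℚ) + (r:ℚ))/(v:ℚ) := by
          rw [add_div, div_self hvne]
        rw [h1, div_div, hsumQ, mul_comm (v:ℚ) 2, mul_div_mul_left _ _ (two_ne_zero)]
    · have hklt : k < 2 ^ m := by omega
      set L := Nat.log 2 k with hL
      have hLm : L + 1 ≤ m := Nat.log_lt_of_lt_pow (by omega) hklt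
      have hAP : (2 ^ (L+1) : ℕ) ∈ N := by
        apply Finset.mem_union_left
        apply Finset.mem_union_left
        exact Finset.mem_image_of_mem _ (Finset.mem_range.mpr (by omega))
      set b := nxt k with hb
      have hbsum : 2 ^ (L + 1) + b = 2 * k := nxt_sum (by omega)
      have hblt : b < k := nxt_lt (by omega)
      have hbN : b = 0 ∨ b ∈ N := by
        rcases Finset.mem_union.mp hkN with hk' | hk'
        · rcases Finset.mem_union.mp hk' with hk'' | hk''
          · obtain ⟨j, hj, hjk⟩ := Finset.mem_image.mp hk''
            left
            have hLj : L = j := by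
              rw [hL, ← hjk, Nat.log_pow (by norm_num)]
            rw [hb]
            unfold nxt
            rw [← hL, hLj, ← hjk]
            have : 2 ^ (j + 1) = 2 * 2 ^ j := by ring
            omega
          · rcases nxt_mem_chn hk'' with h | h
            · exact Or.inl h
            · exact Or.inr (Finset.mem_union_left _ (Finset.mem_union_right _ h))
        · rcases nxt_mem_chn hk' with h | h
          · exact Or.inl h
          · exact Or.inr (Finset.mem_union_right _ h)
      have hBmem : ((b:ℚ)/(v:ℚ)) ∈ T := by
        rcases hbN with h | h
        · rw [h]; simpa using h0T
        · exact memT b h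
      refine ⟨((2 ^ (L+1) : ℕ) : ℚ)/(v:ℚ), memT _ hAP, (b:ℚ)/(v:ℚ), hBmem, ?_, ?_⟩
      · intro h
        have hne : ((2 ^ (L+1) : ℕ) : ℚ) = (b : ℚ) := by
          field_simp at h
          push_cast
          exact_mod_cast h
        have : (2 ^ (L+1) : ℕ) = b := by exact_mod_cast hne
        omega
      · have hvne : (v:ℚ) ≠ 0 := ne_of_gt hvQ
        have hbsumQ : ((2 ^ (L+1) : ℕ) : ℚ) + (b:ℚ) = 2 * (k:ℚ) := by
          exact_mod_cast hbsum
        rw [← add_div, div_div, hbsumQ, mul_comm (v:ℚ) 2,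
          mul_div_mul_left _ _ (two_ne_zero)]
  · -- card bound
    have hTcard : T.card ≤ 2 + N.card := by
      calc T.card ≤ (insert (1:ℚ) (N.image (fun k : ℕ => (k:ℚ)/(v:ℚ)))).card + 1 :=
            Finset.card_insert_le _ _
      _ ≤ (N.image (fun k : ℕ => (k:ℚ)/(v:ℚ))).card + 1 + 1 := by
            have := Finset.card_insert_le (1:ℚ) (N.image (fun k : ℕ => (k:ℚ)/(v:ℚ)))
            omega
      _ ≤ N.card + 1 + 1 := by
            have := Finset.card_image_le (s := N) (f := fun k => (k:ℚ)/(v:ℚ))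
            omega
      _ = 2 + N.card := by omega
    have hchn_sdiff : ∀ t : ℕ, 1 ≤ t → t < 2 ^ m → ((chn t) \ P).card ≤ wt t - 1 := by
      intro t ht1 htm
      obtain ⟨e, he, j, hje⟩ := chn_exists_pow t (by omega)
      have heP : e ∈ P := by
        have het : e ≤ t := (chn_bounds t e he).2
        have hjm : j < m := by
          rw [← Nat.pow_lt_pow_iff_right (a := 2) (by norm_num)]
          omega
        rw [hje]
        exact Finset.mem_image_of_mem _ (Finset.mem_range.mpr (by omega))
      have hsub : (chn t) \ P ⊆ (chn t).erase e := by
        intro x hx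
        rw [Finset.mem_sdiff] at hx
        rw [Finset.mem_erase]
        exact ⟨fun hxe => hx.2 (hxe ▸ heP), hx.1⟩
      calc ((chn t) \ P).card ≤ ((chn t).erase e).card := Finset.card_le_card hsub
      _ = (chn t).card - 1 := Finset.card_erase_of_mem he
      _ ≤ wt t - 1 := by
            have := chn_card_le t
            omega
    have hNsub : N ⊆ P ∪ ((chn r) \ P) ∪ ((chn c) \ P) := by
      intro x hx
      rcases Finset.mem_union.mp hx with hx' | hx'
      · rcases Finset.mem_union.mp hx' with hx'' | hx''
        · exact Finset.mem_union_left _ (Finset.mem_union_left _ hx'')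
        · by_cases hxP : x ∈ P
          · exact Finset.mem_union_left _ (Finset.mem_union_left _ hxP)
          · exact Finset.mem_union_left _ (Finset.mem_union_right _
              (Finset.mem_sdiff.mpr ⟨hx'', hxP⟩))
      · by_cases hxP : x ∈ P
        · exact Finset.mem_union_left _ (Finset.mem_union_left _ hxP)
        · exact Finset.mem_union_right _ (Finset.mem_sdiff.mpr ⟨hx', hxP⟩)
    have hPcard : P.card ≤ m + 1 := by
      calc P.card ≤ (Finset.range (m+1)).card := Finset.card_image_le
      _ = m + 1 := Finset.card_range _
    have hwr : wt r ≤ m := wt_le hrlt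
    have hwc : wt c ≤ m := wt_le hclt
    have hwr1 : 1 ≤ wt r := wt_pos (by omega)
    have hwc1 : 1 ≤ wt c := wt_pos hc
    have hNcard : N.card ≤ 3 * m - 1 := by
      calc N.card ≤ (P ∪ ((chn r) \ P) ∪ ((chn c) \ P)).card := Finset.card_le_card hNsub
      _ ≤ (P ∪ ((chn r) \ P)).card + ((chn c) \ P).card := Finset.card_union_le _ _
      _ ≤ P.card + ((chn r) \ P).card + ((chn c) \ P).card := by
            have := Finset.card_union_le P ((chn r) \ P)
            omega
      _ ≤ (m + 1) + (wt r - 1) + (wt c - 1) := by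
            have h1 := hchn_sdiff r hr1 hrlt
            have h2 := hchn_sdiff c hc hclt
            omega
      _ ≤ 3 * m - 1 := by omega
    omega

/-- The odd core construction, all residues. -/
lemma odd_core (v : ℕ) (hv3 : 3 ≤ v) (hodd : v % 2 = 1) (c : ℕ) (hc : 0 < c)
    (hcv : c < v) :
    ∃ T : Finset ℚ, medQ T ∧ (0:ℚ) ∈ T ∧ (1:ℚ) ∈ T ∧ ((c:ℚ)/(v:ℚ)) ∈ T ∧
      T.card ≤ 3 * Nat.log 2 v + 1 := by
  have hvQ : (0:ℚ) < (v:ℚ) := by exact_mod_cast (by omega : 0 < v)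
  have hvne : (v:ℚ) ≠ 0 := ne_of_gt hvQ
  rcases lt_trichotomy (2*c) v with h | h | h
  · exact odd_core_half v hv3 hodd c hc h
  · omega
  · obtain ⟨T₀, hmed, h0, h1, hmem, hcard⟩ :=
      odd_core_half v hv3 hodd (v - c) (by omega) (by omega)
    refine ⟨T₀.image (fun x => 1 - x), medQ_reflect hmed, ?_, ?_, ?_, ?_⟩
    · have := Finset.mem_image_of_mem (fun x : ℚ => 1 - x) h1
      simpa using this
    · have := Finset.mem_image_of_mem (fun x : ℚ => 1 - x) h0
      simpa using this
    · have hcast : (((v - c : ℕ)):ℚ) = (v:ℚ) - (c:ℚ) := by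
        push_cast [Nat.cast_sub hcv.le]
        ring
      have hval : (1:ℚ) - ((v - c : ℕ):ℚ)/(v:ℚ) = (c:ℚ)/(v:ℚ) := by
        rw [hcast]
        field_simp
        ring
      have := Finset.mem_image_of_mem (fun x : ℚ => 1 - x) hmem
      simpa [hval] using this
    · calc (T₀.image (fun x : ℚ => 1 - x)).card ≤ T₀.card := Finset.card_image_le
      _ ≤ 3 * Nat.log 2 v + 1 := hcard

/-- induction on the power of two in the denominator -/
lemma even_ind (v : ℕ) (hodd : v % 2 = 1) :
    ∀ a q : ℕ, 0 < q → q < 2 ^ a * v →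
      ∃ T : Finset ℚ, medQ T ∧ (0:ℚ) ∈ T ∧ (1:ℚ) ∈ T ∧
        ((q:ℚ)/(((2 ^ a * v : ℕ)):ℚ)) ∈ T ∧
        T.card ≤ (if v = 1 then 2 else 3 * Nat.log 2 v + 1) + a := by
  intro a
  induction a with
  | zero =>
    intro q hq hqv
    simp only [pow_zero, one_mul] at hqv
    have hv3 : 3 ≤ v := by
      rcases Nat.lt_or_ge v 3 with h | h
      · interval_cases v <;> omega
      · exact h
    obtain ⟨T, hmed, h0, h1, hmem, hcard⟩ := odd_core v hv3 hodd q hq hqv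
    refine ⟨T, hmed, h0, h1, ?_, ?_⟩
    · simpa using hmem
    · have : ¬ v = 1 := by omega
      simp [this]
      omega
  | succ a ih =>
    intro q hq hqv
    have hv1 : 1 ≤ v := by omega
    have hden : ((2 ^ (a+1) * v : ℕ) : ℚ) = 2 * ((2 ^ a * v : ℕ) : ℚ) := by
      push_cast
      ring
    have hdpos : 0 < 2 ^ a * v := by positivity
    have hdQ : (0:ℚ) < ((2 ^ a * v : ℕ) : ℚ) := by exact_mod_cast hdpos
    have hdne : ((2 ^ a * v : ℕ) : ℚ) ≠ 0 := ne_of_gt hdQ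
    have h2av : 2 ^ (a+1) * v = 2 * (2 ^ a * v) := by ring
    rcases lt_trichotomy q (2 ^ a * v) with hlt | heq | hgt
    · obtain ⟨T, hmed, h0, h1, hmem, hcard⟩ := ih q hq hlt
      set x' : ℚ := (q:ℚ)/((2 ^ a * v : ℕ) : ℚ) with hx'
      have hx0 : x' ≠ 0 := by
        have : 0 < x' := by
          rw [hx']
          apply div_pos _ hdQ
          exact_mod_cast hq
        exact ne_of_gt this
      have hx1 : x' ≠ 1 := by
        have : x' < 1 := by
          rw [hx', div_lt_one hdQ]
          exact_mod_cast hlt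
        exact ne_of_lt this
      refine ⟨insert ((x' + 0)/2) T,
        medQ_insert_half hmed x' hmem hx0 hx1 0 (Or.inl rfl) h0 h1,
        Finset.mem_insert_of_mem h0, Finset.mem_insert_of_mem h1, ?_, ?_⟩
      · have hval : (q:ℚ)/((2 ^ (a+1) * v : ℕ) : ℚ) = (x' + 0)/2 := by
          rw [hden, hx', add_zero, div_div, mul_comm]
        rw [hval]
        exact Finset.mem_insert_self _ _
      · have := Finset.card_insert_le ((x' + 0)/2) T
        omega
    · refine ⟨insert (0:ℚ) (insert (1/2 : ℚ) ({1} : Finset ℚ)), ?_, ?_, ?_, ?_, ?_⟩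
      · intro u hu hu0 hu1
        rcases Finset.mem_insert.mp hu with rfl | hu'
        · exact absurd rfl hu0
        rcases Finset.mem_insert.mp hu' with rfl | hu''
        · refine ⟨0, Finset.mem_insert_self _ _, 1, ?_, by norm_num, by norm_num⟩
          exact Finset.mem_insert_of_mem (Finset.mem_insert_of_mem (Finset.mem_singleton_self _))
        · rw [Finset.mem_singleton.mp hu''] at hu1
          exact absurd rfl hu1
      · exact Finset.mem_insert_self _ _
      · exact Finset.mem_insert_of_mem (Finset.mem_insert_of_mem (Finset.mem_singleton_self _))
      · have hval : (q:ℚ)/((2 ^ (a+1) * v : ℕ) : ℚ) = 1/2 := by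
          rw [hden, heq]
          rw [div_eq_div_iff (by positivity) (by norm_num)]
          ring
        rw [hval]
        exact Finset.mem_insert_of_mem (Finset.mem_insert_self _ _)
      · have hc3 : (insert (0:ℚ) (insert (1/2 : ℚ) ({1} : Finset ℚ))).card ≤ 3 := by
          have h1' := Finset.card_insert_le (0:ℚ) (insert (1/2 : ℚ) ({1} : Finset ℚ))
          have h2' := Finset.card_insert_le (1/2:ℚ) ({1} : Finset ℚ)
          have h3' : ({1} : Finset ℚ).card = 1 := Finset.card_singleton _
          omega
        by_cases hv : v = 1
        · simp only [hv, if_pos]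
          simp at hc3 ⊢
          omega
        · have hv3 : 3 ≤ v := by omega
          have hlog1 : 1 ≤ Nat.log 2 v := Nat.le_log_of_pow_le (by norm_num) (by omega)
          simp only [if_neg hv]
          omega
    · have hq' : 0 < q - 2 ^ a * v := by omega
      have hlt' : q - 2 ^ a * v < 2 ^ a * v := by omega
      obtain ⟨T, hmed, h0, h1, hmem, hcard⟩ := ih (q - 2 ^ a * v) hq' hlt'
      set x' : ℚ := ((q - 2 ^ a * v : ℕ):ℚ)/((2 ^ a * v : ℕ) : ℚ) with hx'
      have hcast : ((q - 2 ^ a * v : ℕ):ℚ) = (q:ℚ) - ((2 ^ a * v : ℕ) : ℚ) := by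
        exact Nat.cast_sub (le_of_lt hgt)
      have hx0 : x' ≠ 0 := by
        have : 0 < x' := by
          rw [hx']
          apply div_pos _ hdQ
          exact_mod_cast hq'
        exact ne_of_gt this
      have hx1 : x' ≠ 1 := by
        have : x' < 1 := by
          rw [hx', div_lt_one hdQ]
          exact_mod_cast hlt'
        exact ne_of_lt this
      refine ⟨insert ((x' + 1)/2) T,
        medQ_insert_half hmed x' hmem hx0 hx1 1 (Or.inr rfl) h0 h1,
        Finset.mem_insert_of_mem h0, Finset.mem_insert_of_mem h1, ?_, ?_⟩
      · have hval : (q:ℚ)/((2 ^ (a+1) * v : ℕ) : ℚ) = (x' + 1)/2 := by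
          rw [hden, hx', hcast]
          have h1 : ((q:ℚ) - ((2 ^ a * v : ℕ) : ℚ))/((2 ^ a * v : ℕ) : ℚ) + 1
              = (((q:ℚ) - ((2 ^ a * v : ℕ) : ℚ)) + ((2 ^ a * v : ℕ) : ℚ))/((2 ^ a * v : ℕ) : ℚ) := by
            rw [add_div, div_self hdne]
          rw [h1, sub_add_cancel, div_div, mul_comm]
        rw [hval]
        exact Finset.mem_insert_self _ _
      · have := Finset.card_insert_le ((x' + 1)/2) T
        omega

lemma logb_ge_of_pow_le {c d n : ℕ} (hn : 1 ≤ n) (h : 2 ^ c ≤ n ^ d) (hd : 0 < d) :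
    (c : ℝ) / (d : ℝ) ≤ Real.logb 2 (n : ℝ) := by
  have hl2 : (0:ℝ) < Real.log 2 := Real.log_pos (by norm_num)
  have hnR : (1:ℝ) ≤ (n:ℝ) := by exact_mod_cast hn
  have hlog : (c:ℝ) * Real.log 2 ≤ (d:ℝ) * Real.log (n:ℝ) := by
    have h1 : Real.log ((2:ℝ) ^ c) ≤ Real.log ((n:ℝ) ^ d) := by
      apply Real.log_le_log (by positivity)
      exact_mod_cast h
    rwa [Real.log_pow, Real.log_pow] at h1
  have hdR : (0:ℝ) < (d:ℝ) := by exact_mod_cast hd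
  rw [Real.logb, div_le_div_iff₀ hdR hl2]
  linarith

lemma coreQ (p q : ℕ) (hq : 0 < q) (hqp : q < p) :
    ∃ T : Finset ℚ, medQ T ∧ (0:ℚ) ∈ T ∧ (1:ℚ) ∈ T ∧ ((q:ℚ)/(p:ℚ)) ∈ T ∧
      (T.card : ℝ) < (1/2) * (Real.logb 2 (p:ℝ) + 3/2)^2 := by
  have hp2 : 2 ≤ p := by omega
  obtain ⟨a, v, hvd, hpav⟩ :=
    Nat.exists_eq_pow_mul_and_not_dvd (by omega : p ≠ 0) 2 (by norm_num)
  have hodd : v % 2 = 1 := by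
    rcases Nat.mod_two_eq_zero_or_one v with h | h
    · exact absurd (Nat.dvd_of_mod_eq_zero h) hvd
    · exact h
  have hv1 : 1 ≤ v := by omega
  obtain ⟨T, hmed, h0, h1, hmem, hcard⟩ := even_ind v hodd a q hq (by omega)
  have hvne : ((v:ℕ):ℝ) ≠ 0 := by
    have : (0:ℝ) < (v:ℝ) := by exact_mod_cast hv1
    exact ne_of_gt this
  have hlogp : Real.logb 2 (p:ℝ) = (a:ℝ) + Real.logb 2 (v:ℝ) := by
    have hpr : (p:ℝ) = (2:ℝ)^a * (v:ℝ) := by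
      rw [hpav]; push_cast; ring
    rw [hpr, Real.logb_mul (by positivity) hvne, Real.logb_pow,
      Real.logb_self_eq_one (by norm_num)]
    ring
  refine ⟨T, hmed, h0, h1, ?_, ?_⟩
  · rw [hpav]
    exact hmem
  · have haR : (0:ℝ) ≤ (a:ℝ) := by positivity
    by_cases hv : v = 1
    · -- dyadic case
      have ha1 : 1 ≤ a := by
        by_contra hcon
        push_neg at hcon
        interval_cases a <;> omega
      have hcard' : (T.card : ℝ) ≤ 2 + (a:ℝ) := by
        rw [hv] at hcard
        simp at hcard
        exact_mod_cast hcard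
      have hlv : Real.logb 2 (v:ℝ) = 0 := by rw [hv]; simp
      have haR1 : (1:ℝ) ≤ (a:ℝ) := by exact_mod_cast ha1
      rw [hlogp, hlv]
      nlinarith [hcard', haR1]
    · have hv3 : 3 ≤ v := by omega
      set m := Nat.log 2 v with hm
      have hm1 : 1 ≤ m := Nat.le_log_of_pow_le (by norm_num) (by omega)
      have hpowle : 2 ^ m ≤ v := Nat.pow_log_le_self 2 (by omega)
      have hcard' : (T.card : ℝ) ≤ 3 * (m:ℝ) + 1 + (a:ℝ) := by
        rw [if_neg hv] at hcard
        push_cast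
        exact_mod_cast hcard
      have hlvm : (m:ℝ) ≤ Real.logb 2 (v:ℝ) := by
        have h2m : Real.logb 2 ((2:ℝ)^m) = (m:ℝ) := by
          rw [Real.logb_pow, Real.logb_self_eq_one (by norm_num)]
          ring
        rw [← h2m]
        apply Real.logb_le_logb_of_le (by norm_num) (by positivity)
        exact_mod_cast hpowle
      rw [hlogp]
      rcases Nat.lt_or_ge m 3 with hm3 | hm3
      · interval_cases m
        · -- m = 1
          have hlv32 : (3:ℝ)/2 ≤ Real.logb 2 (v:ℝ) := by
            have := logb_ge_of_pow_le (n := v) (c := 3) (d := 2) (by omega)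
              (by nlinarith [hv3]) (by norm_num)
            exact_mod_cast this
          have hc : (T.card : ℝ) ≤ (a:ℝ) + 4 := by push_cast at hcard' ⊢; linarith
          nlinarith [hlv32, haR, hc, sq_nonneg ((a:ℝ))]
        · -- m = 2
          have hv5 : 5 ≤ v := by
            have h4 : 4 ≤ v := by simpa using hpowle
            omega
          have hlv30 : (30:ℝ)/13 ≤ Real.logb 2 (v:ℝ) := by
            have h513 : 2 ^ 30 ≤ v ^ 13 := by
              calc (2:ℕ) ^ 30 ≤ 5 ^ 13 := by norm_num
              _ ≤ v ^ 13 := Nat.pow_le_pow_left hv5 _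
            have := logb_ge_of_pow_le (n := v) (c := 30) (d := 13) (by omega) h513 (by norm_num)
            exact_mod_cast this
          have hc : (T.card : ℝ) ≤ (a:ℝ) + 7 := by push_cast at hcard' ⊢; linarith
          nlinarith [hlv30, haR, hc, sq_nonneg ((a:ℝ))]
      · have hmR : (3:ℝ) ≤ (m:ℝ) := by exact_mod_cast hm3
        nlinarith [hlvm, haR, hcard', hmR, sq_nonneg ((a:ℝ)), sq_nonneg ((m:ℝ) - 3),
          mul_nonneg haR (by linarith : (0:ℝ) ≤ (m:ℝ))]

end RMS

/-- For a finite affinely independent set `A ⊆ ℚⁿ`, a finite set `M ⊆ ℚⁿ` is an `A`-rational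
mediated set if `A ⊆ M` and every point of `M \ A` is the average of two distinct points
of `M`. -/
def IsRatMediatedSet {n : ℕ} (A M : Finset (Fin n → ℚ)) : Prop :=
  A ⊆ M ∧ ∀ u ∈ M, u ∉ A → ∃ v ∈ M, ∃ w ∈ M, v ≠ w ∧ u = (2⁻¹ : ℚ) • (v + w)

/-- Let `α₁ ≠ α₂` be two points of `ℚⁿ` and let
`β = (1 − q/p)·α₁ + (q/p)·α₂` where `p, q ∈ ℕ`, `0 < q < p` and `gcd(p,q) = 1`. Then there
exists an `{α₁,α₂}`-rational mediated set `M` containing `β` with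
`#M < (1/2)·(log₂ p + 3/2)²`. -/
theorem exists_ratMediatedSet_card_lt {n : ℕ} (α₁ α₂ : Fin n → ℚ) (hne : α₁ ≠ α₂)
    (p q : ℕ) (hq : 0 < q) (hqp : q < p) (hgcd : Nat.gcd p q = 1) (β : Fin n → ℚ)
    (hβ : β = (1 - (q : ℚ) / p) • α₁ + ((q : ℚ) / p) • α₂) :
    ∃ M : Finset (Fin n → ℚ), IsRatMediatedSet {α₁, α₂} M ∧ β ∈ M ∧
      (M.card : ℝ) < (1 / 2) * (Real.logb 2 (p : ℝ) + 3 / 2) ^ 2 := by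

  obtain ⟨T, hmed, h0, h1, hmem, hcard⟩ := RMS.coreQ p q hq hqp
  set φ : ℚ → (Fin n → ℚ) := fun t => (1 - t) • α₁ + t • α₂ with hφ
  have hφeval : ∀ (t : ℚ) (i : Fin n), φ t i = (1 - t) * α₁ i + t * α₂ i := by
    intro t i
    simp [hφ, Pi.add_apply, Pi.smul_apply, smul_eq_mul]
  obtain ⟨i₀, hi₀⟩ : ∃ i, α₁ i ≠ α₂ i := by
    by_contra hc
    push_neg at hc
    exact hne (funext hc)
  have hinj : Function.Injective φ := by
    intro s t h
    have h1' := congrFun h i₀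
    rw [hφeval, hφeval] at h1'
    have h2 : (s - t) * (α₂ i₀ - α₁ i₀) = 0 := by linear_combination h1'
    rcases mul_eq_zero.mp h2 with h3 | h3
    · linarith [h3]
    · exact absurd (by linarith : α₁ i₀ = α₂ i₀) hi₀
  have hφ0 : φ 0 = α₁ := by
    funext i
    rw [hφeval]
    ring
  have hφ1 : φ 1 = α₂ := by
    funext i
    rw [hφeval]
    ring
  have hmid : ∀ x y : ℚ, φ ((x + y)/2) = (2⁻¹ : ℚ) • (φ x + φ y) := by
    intro x y
    funext i
    rw [Pi.smul_apply, Pi.add_apply, hφeval, hφeval, hφeval, smul_eq_mul]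
    ring
  refine ⟨T.image φ, ⟨?_, ?_⟩, ?_, ?_⟩
  · intro x hx
    rcases Finset.mem_insert.mp hx with rfl | hx'
    · exact Finset.mem_image.mpr ⟨0, h0, hφ0⟩
    · rw [Finset.mem_singleton.mp hx']
      exact Finset.mem_image.mpr ⟨1, h1, hφ1⟩
  · intro u hu hA
    obtain ⟨t, htT, rfl⟩ := Finset.mem_image.mp hu
    have ht0 : t ≠ 0 := by
      rintro rfl
      exact hA (by rw [hφ0]; exact Finset.mem_insert_self _ _)
    have ht1 : t ≠ 1 := by
      rintro rfl
      exact hA (by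
        rw [hφ1]
        exact Finset.mem_insert_of_mem (Finset.mem_singleton_self _))
    obtain ⟨x, hx, y, hy, hxy, heq⟩ := hmed t htT ht0 ht1
    refine ⟨φ x, Finset.mem_image_of_mem _ hx, φ y, Finset.mem_image_of_mem _ hy,
      fun h => hxy (hinj h), ?_⟩
    rw [heq, hmid]
  · rw [hβ]
    exact Finset.mem_image_of_mem _ hmem
  · rw [Finset.card_image_of_injective _ hinj]
    exact hcard
end

section
/- Let α₁ ≠ α₂ be two points of ℚⁿ and let β be a rational point on the line segment between α₁ and α₂. Suppose that every coordinate of α₁, α₂ and β has odd denominator, and that every coordinate of α₁ and α₂ has even numerator. Then there exists an {α₁,α₂}-rational mediated set M containing β such that every coordinate of every point of M has odd denominator and every coordinate of every point of M \ {β} has even numerator. -/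
def OdQ (q : ℚ) : Prop := ∃ a b : ℤ, Odd b ∧ q * b = a

def EvQ (q : ℚ) : Prop := ∃ a b : ℤ, Odd b ∧ Even a ∧ q * b = a

lemma odQ_of_odd_den {q : ℚ} (h : Odd q.den) : OdQ q :=
  ⟨q.num, q.den, by exact_mod_cast h, Rat.mul_den_eq_num q⟩

lemma evQ_of {q : ℚ} (h1 : Odd q.den) (h2 : Even q.num) : EvQ q :=
  ⟨q.num, q.den, by exact_mod_cast h1, h2, Rat.mul_den_eq_num q⟩

lemma odQ_of_evQ {q : ℚ} (h : EvQ q) : OdQ q := by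
  obtain ⟨a, b, hb, _, hab⟩ := h
  exact ⟨a, b, hb, hab⟩

lemma odd_den_of_dvd {d : ℕ} {b : ℤ} (hdvd : (d : ℤ) ∣ b) (hb : Odd b) : Odd d := by
  rcases Nat.even_or_odd d with he | ho
  · exfalso
    have h2 : (2 : ℤ) ∣ (d : ℤ) := by exact_mod_cast he.two_dvd
    have : Even b := (even_iff_two_dvd).mpr (h2.trans hdvd)
    exact (Int.not_even_iff_odd.mpr hb) this
  · exact ho

lemma odd_den_of_odQ {q : ℚ} (h : OdQ q) : Odd q.den := by
  obtain ⟨a, b, hb, hab⟩ := h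
  have hb0 : b ≠ 0 := by rintro rfl; simp [Int.odd_iff] at hb
  have hbq : (b : ℚ) ≠ 0 := by exact_mod_cast hb0
  have hq : q = (a : ℚ) / b := by field_simp [← hab]; exact hab
  have hdvd : ((q.den : ℤ)) ∣ b := by
    rw [hq, ← Rat.divInt_eq_div]; exact Rat.den_dvd a b
  exact odd_den_of_dvd hdvd hb

lemma even_num_of_evQ {q : ℚ} (h : EvQ q) : Even q.num := by
  obtain ⟨a, b, hb, ha, hab⟩ := h
  have key : q.num * b = a * (q.den : ℤ) := by
    have : (q.num : ℚ) * b = (a : ℚ) * q.den := by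
      rw [← Rat.mul_den_eq_num q, mul_assoc, mul_comm (q.den:ℚ) (b:ℚ), ← mul_assoc, hab]
    exact_mod_cast this
  have hev : Even (q.num * b) := key ▸ ha.mul_right _
  rcases Int.even_mul.mp hev with h' | h'
  · exact h'
  · exact absurd h' (Int.not_even_iff_odd.mpr hb)

lemma odQ_sub {q r : ℚ} (hq : OdQ q) (hr : OdQ r) : OdQ (q - r) := by
  obtain ⟨a, b, hb, hab⟩ := hq
  obtain ⟨a', b', hb', hab'⟩ := hr
  refine ⟨a * b' - a' * b, b * b', hb.mul hb', ?_⟩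
  push_cast
  calc (q - r) * (b * b') = (q * b) * b' - (r * b') * b := by ring
    _ = (a : ℚ) * b' - a' * b := by rw [hab, hab']

lemma evQ_add {q r : ℚ} (hq : EvQ q) (hr : EvQ r) : EvQ (q + r) := by
  obtain ⟨a, b, hb, ha, hab⟩ := hq
  obtain ⟨a', b', hb', ha', hab'⟩ := hr
  refine ⟨a * b' + a' * b, b * b', hb.mul hb', (ha.mul_right _).add (ha'.mul_right _), ?_⟩
  push_cast
  calc (q + r) * (b * b') = (q * b) * b' + (r * b') * b := by ring
    _ = (a : ℚ) * b' + a' * b := by rw [hab, hab']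

lemma evQ_sub {q r : ℚ} (hq : EvQ q) (hr : EvQ r) : EvQ (q - r) := by
  obtain ⟨a, b, hb, ha, hab⟩ := hq
  obtain ⟨a', b', hb', ha', hab'⟩ := hr
  refine ⟨a * b' - a' * b, b * b', hb.mul hb', (ha.mul_right _).sub (ha'.mul_right _), ?_⟩
  push_cast
  calc (q - r) * (b * b') = (q * b) * b' - (r * b') * b := by ring
    _ = (a : ℚ) * b' - a' * b := by rw [hab, hab']

lemma odQ_mul_evQ {q r : ℚ} (hq : OdQ q) (hr : EvQ r) : EvQ (q * r) := by
  obtain ⟨a, b, hb, hab⟩ := hq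
  obtain ⟨a', b', hb', ha', hab'⟩ := hr
  refine ⟨a * a', b * b', hb.mul hb', ha'.mul_left _, ?_⟩
  push_cast
  calc (q * r) * (b * b') = (q * b) * (r * b') := by ring
    _ = (a : ℚ) * a' := by rw [hab, hab']

lemma odQ_intCast (a : ℤ) : OdQ (a : ℚ) := ⟨a, 1, odd_one, by push_cast; ring⟩

lemma evQ_even_int_mul {c : ℤ} {q : ℚ} (hc : Even c) (hq : OdQ q) : EvQ ((c : ℚ) * q) := by
  obtain ⟨a, b, hb, hab⟩ := hq
  refine ⟨c * a, b, hb, hc.mul_right _, ?_⟩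
  push_cast
  rw [mul_assoc, hab]
/-- The property of a finite set `Λ ⊆ ℚ` being a mediated parameter chain for `t`. -/
def ChainP (t : ℚ) (Λ : Finset ℚ) : Prop :=
  0 ∈ Λ ∧ 1 ∈ Λ ∧ t ∈ Λ ∧
  (∀ l ∈ Λ, l ≠ 0 → l ≠ 1 → ∃ u ∈ Λ, ∃ v ∈ Λ, u ≠ v ∧ l = (u + v) / 2) ∧
  (∀ l ∈ Λ, l ≠ t → ∃ a c : ℤ, l = (a : ℚ) + c * t ∧ (Even c ∨ (Odd t.den ∧ Odd l.den)))

lemma chain_step {t t' : ℚ} {Λ' : Finset ℚ} (k : ℤ) (ht' : t' = 2 * t - k)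
    (hkΛ : (k : ℚ) ∈ Λ') (hkt : (k : ℚ) ≠ t) (h : ChainP t' Λ') :
    ChainP t (insert t Λ') := by
  obtain ⟨h0, h1, ht'', hmed, hpar⟩ := h
  refine ⟨Finset.mem_insert_of_mem h0, Finset.mem_insert_of_mem h1,
    Finset.mem_insert_self t Λ', ?_, ?_⟩
  · intro l hl hl0 hl1
    rcases Finset.mem_insert.mp hl with rfl | hl'
    · refine ⟨(k : ℚ), Finset.mem_insert_of_mem hkΛ, t',
        Finset.mem_insert_of_mem ht'', ?_, ?_⟩
      · intro hkk
        apply hkt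
        rw [← hkk] at ht'
        linarith [ht']
      · rw [ht']; ring
    · obtain ⟨u, hu, v, hv, huv, heq⟩ := hmed l hl' hl0 hl1
      exact ⟨u, Finset.mem_insert_of_mem hu, v, Finset.mem_insert_of_mem hv, huv, heq⟩
  · intro l hl hlt
    rcases Finset.mem_insert.mp hl with rfl | hl'
    · exact absurd rfl hlt
    by_cases hlt' : l = t'
    · refine ⟨-k, 2, ?_, Or.inl even_two⟩
      rw [hlt', ht']; push_cast; ring
    · obtain ⟨a, c, heq, _⟩ := hpar l hl' hlt'
      refine ⟨a - c * k, 2 * c, ?_, Or.inl ⟨c, two_mul c⟩⟩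
      rw [heq, ht']; push_cast; ring

lemma chain_odd (t : ℚ) (h0 : 0 ≤ t) (h1 : t ≤ 1) (hodd : Odd t.den) :
    ∃ Λ : Finset ℚ, ChainP t Λ := by
  have hq0 : 0 < t.den := t.pos
  have hqQ : (t.den : ℚ) ≠ 0 := by positivity
  have hinj : ∀ j j' : ℕ, (j : ℚ) / t.den = (j' : ℚ) / t.den → j = j' := by
    intro j j' h
    field_simp at h
    exact_mod_cast h
  have hnn : 0 ≤ t.num := Rat.num_nonneg.mpr h0
  have hle : t.num ≤ (t.den : ℤ) := by
    have h1' : (t.num : ℚ) ≤ (t.den : ℚ) := by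
      have hq : t = (t.num : ℚ) / t.den := (Rat.num_div_den t).symm
      rw [hq, div_le_one (by positivity : (0:ℚ) < (t.den : ℚ))] at h1
      exact h1
    exact_mod_cast h1'
  refine ⟨(Finset.range (t.den + 1)).image (fun j : ℕ => (j : ℚ) / (t.den : ℚ)), ?_, ?_, ?_, ?_, ?_⟩
  · exact Finset.mem_image.mpr ⟨0, Finset.mem_range.mpr (by omega), by simp⟩
  · exact Finset.mem_image.mpr ⟨t.den, Finset.mem_range.mpr (by omega), by
      simp [div_self hqQ]⟩
  · refine Finset.mem_image.mpr ⟨t.num.toNat, Finset.mem_range.mpr (by omega), ?_⟩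
    have : ((t.num.toNat : ℕ) : ℚ) = (t.num : ℚ) := by
      exact_mod_cast Int.toNat_of_nonneg hnn
    rw [this, Rat.num_div_den t]
  · intro l hl hl0 hl1
    obtain ⟨j, hjr, rfl⟩ := Finset.mem_image.mp hl
    have hjq : j ≤ t.den := by simpa using Nat.lt_succ_iff.mp (Finset.mem_range.mp hjr)
    have hj0 : j ≠ 0 := by rintro rfl; simp at hl0
    have hjd : j ≠ t.den := by rintro rfl; exact hl1 (div_self hqQ)
    refine ⟨((j - 1 : ℕ) : ℚ) / t.den, Finset.mem_image.mpr ⟨j - 1,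
        Finset.mem_range.mpr (by omega), rfl⟩,
      ((j + 1 : ℕ) : ℚ) / t.den, Finset.mem_image.mpr ⟨j + 1,
        Finset.mem_range.mpr (by omega), rfl⟩, ?_, ?_⟩
    · intro h
      have := hinj _ _ h
      omega
    · have h1j : 1 ≤ j := by omega
      push_cast [Nat.cast_sub h1j]
      field_simp
      ring
  · intro l hl _
    obtain ⟨j, hjr, rfl⟩ := Finset.mem_image.mp hl
    have hcop : IsCoprime t.num (t.den : ℤ) :=
      Int.isCoprime_iff_gcd_eq_one.mpr (by simpa [Int.gcd] using t.reduced)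
    obtain ⟨x, y, hxy⟩ := hcop
    have hxyQ : (x : ℚ) * t.num + (y : ℚ) * t.den = 1 := by exact_mod_cast hxy
    refine ⟨j * y, j * x, ?_, Or.inr ⟨hodd, ?_⟩⟩
    · have htn : (t.num : ℚ) = t * t.den := (Rat.mul_den_eq_num t).symm
      rw [div_eq_iff hqQ]
      push_cast
      linear_combination (-(j : ℚ)) * hxyQ + ((j : ℚ) * (x : ℚ)) * htn
    · have hdvd : ((((j : ℚ) / t.den).den : ℤ)) ∣ (t.den : ℤ) := by
        rw [show ((j : ℚ) / (t.den : ℚ)) = ((j : ℤ) : ℚ) / ((t.den : ℤ) : ℚ) by push_cast; ring,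
          ← Rat.divInt_eq_div]
        exact Rat.den_dvd _ _
      exact odd_den_of_dvd hdvd (by exact_mod_cast hodd)

lemma chain_exists : ∀ (d : ℕ) (t : ℚ), t.den = d → 0 ≤ t → t ≤ 1 →
    ∃ Λ : Finset ℚ, ChainP t Λ := by
  intro d
  induction d using Nat.strong_induction_on with
  | _ d IH =>
    intro t hd h0 h1
    rcases Nat.even_or_odd t.den with he | ho
    · -- even denominator: halve it
      have hd1 : t.den ≠ 1 := by
        intro h; rw [h] at he; exact (Nat.not_even_iff_odd.mpr odd_one) he
      have ht0 : t ≠ 0 := by rintro rfl; simp at hd1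
      have ht1 : t ≠ 1 := by rintro rfl; simp at hd1
      obtain ⟨e, hee⟩ := he
      have he1 : 1 ≤ e := by have := t.pos; omega
      have heQ : ((e : ℚ)) ≠ 0 := by positivity
      have heeQ : (t.den : ℚ) = (e : ℚ) + (e : ℚ) := by exact_mod_cast hee
      have h2t : (2 : ℚ) * t = (t.num : ℚ) / e := by
        conv_lhs => rw [← Rat.num_div_den t]
        rw [heeQ]
        field_simp
        ring
      set k : ℤ := if t ≤ 1 / 2 then 0 else 1 with hk
      set t' : ℚ := 2 * t - (k : ℚ) with ht'def
      have hkt : (k : ℚ) ≠ t := by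
        rcases ite_eq_or_eq (t ≤ 1/2) (0:ℤ) 1 with h | h <;> rw [hk, h]
        · exact fun hh => ht0 (by exact_mod_cast hh.symm)
        · exact fun hh => ht1 (by exact_mod_cast hh.symm)
      have ht'0 : 0 ≤ t' := by
        rw [ht'def, hk]
        split_ifs with h
        · push_cast; linarith
        · push_cast; linarith [not_le.mp h]
      have ht'1 : t' ≤ 1 := by
        rw [ht'def, hk]
        split_ifs with h
        · push_cast; linarith
        · push_cast; linarith
      have ht'e : t' = ((t.num - k * e : ℤ) : ℚ) / ((e : ℤ) : ℚ) := by
        rw [ht'def, h2t]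
        push_cast
        field_simp
      have hdvd : ((t'.den : ℤ)) ∣ ((e : ℕ) : ℤ) := by
        rw [ht'e, ← Rat.divInt_eq_div]
        exact Rat.den_dvd _ _
      have hlt : t'.den < d := by
        have hdn : t'.den ≤ e := by
          have := Int.ofNat_dvd.mp (by exact_mod_cast hdvd)
          exact Nat.le_of_dvd (by omega) this
        omega
      obtain ⟨Λ', hΛ'⟩ := IH t'.den hlt t' rfl ht'0 ht'1
      have hkΛ : (k : ℚ) ∈ Λ' := by
        rcases ite_eq_or_eq (t ≤ 1/2) (0:ℤ) 1 with h | h <;> rw [hk, h]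
        · exact_mod_cast hΛ'.1
        · exact_mod_cast hΛ'.2.1
      exact ⟨insert t Λ', chain_step k ht'def hkΛ hkt hΛ'⟩
    · exact chain_odd t h0 h1 ho
/-- Let `α₁ ≠ α₂` be two points of `ℚⁿ` and let `β` be a rational point on
the segment between them. If every coordinate of `α₁, α₂, β` has odd denominator and every
coordinate of `α₁, α₂` has even numerator, then there exists an `{α₁,α₂}`-rational mediated
set `M` containing `β` such that every coordinate of every point of `M` has odd denominator
and every coordinate of every point of `M \ {β}` has even numerator. -/
theorem exists_ratMediatedSet_parity {n : ℕ} (α₁ α₂ : Fin n → ℚ) (hne : α₁ ≠ α₂)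
    (β : Fin n → ℚ) (hβ : β ∈ segment ℚ α₁ α₂)
    (hden : ∀ i, Odd (α₁ i).den ∧ Odd (α₂ i).den ∧ Odd (β i).den)
    (hnum : ∀ i, Even (α₁ i).num ∧ Even (α₂ i).num) :
    ∃ M : Finset (Fin n → ℚ), IsRatMediatedSet {α₁, α₂} M ∧ β ∈ M ∧
      (∀ u ∈ M, ∀ i, Odd (u i).den) ∧
      (∀ u ∈ M, u ≠ β → ∀ i, Even (u i).num) := by
  classical
  obtain ⟨a, t, ha, hb, hab, hsum⟩ := hβ
  have h0 : (0 : ℚ) ≤ t := hb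
  have h1 : t ≤ 1 := by linarith
  obtain ⟨Λ, hΛ0, hΛ1, hΛt, hmed, hpar⟩ := chain_exists t.den t rfl h0 h1
  set f : ℚ → (Fin n → ℚ) := fun l i => α₁ i + l * (α₂ i - α₁ i) with hf
  have hfβ : f t = β := by
    funext i
    have hi := congrFun hsum i
    simp only [Pi.add_apply, Pi.smul_apply, smul_eq_mul] at hi
    have ha' : a = 1 - t := by linarith
    rw [ha'] at hi
    show α₁ i + t * (α₂ i - α₁ i) = β i
    linear_combination hi
  have hfinj : Function.Injective f := by
    obtain ⟨i0, hi0⟩ := Function.ne_iff.mp hne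
    intro u v huv
    have h := congrFun huv i0
    simp only [hf] at h
    have hδ : α₂ i0 - α₁ i0 ≠ 0 := sub_ne_zero.mpr (Ne.symm hi0)
    have : u * (α₂ i0 - α₁ i0) = v * (α₂ i0 - α₁ i0) := by linarith
    exact mul_right_cancel₀ hδ this
  have hfα₁ : f 0 = α₁ := by funext i; simp [hf]
  have hfα₂ : f 1 = α₂ := by funext i; simp [hf]
  -- key parity fact for every chain parameter other than `t`
  have hkey : ∀ l ∈ Λ, l ≠ t → ∀ i, EvQ (f l i) := by
    intro l hl hlt i
    have hE1 : EvQ (α₁ i) := evQ_of (hden i).1 (hnum i).1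
    have hE2 : EvQ (α₂ i) := evQ_of (hden i).2.1 (hnum i).2
    have hOβ : OdQ (β i) := odQ_of_odd_den (hden i).2.2
    have hδ : EvQ (α₂ i - α₁ i) := evQ_sub hE2 hE1
    have htδ : OdQ (t * (α₂ i - α₁ i)) := by
      have he : t * (α₂ i - α₁ i) = β i - α₁ i := by
        rw [← hfβ]; simp only [hf]; ring
      rw [he]; exact odQ_sub hOβ (odQ_of_evQ hE1)
    obtain ⟨ca, cc, heq, hdisj⟩ := hpar l hl hlt
    rcases hdisj with hc | ⟨_, hol⟩
    · have he : f l i = α₁ i + (ca : ℚ) * (α₂ i - α₁ i) +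
          (cc : ℚ) * (t * (α₂ i - α₁ i)) := by
        simp only [hf]; rw [heq]; ring
      rw [he]
      exact evQ_add (evQ_add hE1 (odQ_mul_evQ (odQ_intCast _) hδ))
        (evQ_even_int_mul hc htδ)
    · have he : f l i = α₁ i + l * (α₂ i - α₁ i) := by simp [hf]
      rw [he]
      exact evQ_add hE1 (odQ_mul_evQ (odQ_of_odd_den hol) hδ)
  refine ⟨Λ.image f, ⟨?_, ?_⟩, ?_, ?_, ?_⟩
  · intro x hx
    rcases Finset.mem_insert.mp hx with rfl | hx'
    · exact Finset.mem_image.mpr ⟨0, hΛ0, hfα₁⟩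
    · rw [Finset.mem_singleton.mp hx']
      exact Finset.mem_image.mpr ⟨1, hΛ1, hfα₂⟩
  · intro u hu hA
    obtain ⟨l, hlΛ, rfl⟩ := Finset.mem_image.mp hu
    have hl0 : l ≠ 0 := by
      rintro rfl
      exact hA (by rw [hfα₁]; exact Finset.mem_insert_self _ _)
    have hl1 : l ≠ 1 := by
      rintro rfl
      exact hA (by rw [hfα₂]; exact Finset.mem_insert_of_mem (Finset.mem_singleton_self _))
    obtain ⟨μ, hμ, ν, hν, hμν, heq⟩ := hmed l hlΛ hl0 hl1
    refine ⟨f μ, Finset.mem_image.mpr ⟨μ, hμ, rfl⟩, f ν, Finset.mem_image.mpr ⟨ν, hν, rfl⟩,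
      fun h => hμν (hfinj h), ?_⟩
    funext i
    simp only [hf, Pi.smul_apply, Pi.add_apply, smul_eq_mul]
    rw [heq]; ring
  · exact Finset.mem_image.mpr ⟨t, hΛt, hfβ⟩
  · intro u hu i
    obtain ⟨l, hl, rfl⟩ := Finset.mem_image.mp hu
    by_cases hlt : l = t
    · rw [hlt, hfβ]; exact (hden i).2.2
    · exact odd_den_of_odQ (odQ_of_evQ (hkey l hl hlt i))
  · intro u hu hub i
    obtain ⟨l, hl, rfl⟩ := Finset.mem_image.mp hu
    have hlt : l ≠ t := by rintro rfl; exact hub hfβ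
    exact even_num_of_evQ (hkey l hl hlt i)
end

section
/- Let 𝒜 = {α₁,…,α_m} be a trellis in ℕⁿ and let β be a lattice point in the relative interior of the convex hull of 𝒜. Then there exists an 𝒜-rational mediated set M containing β. -/
/-- A lattice point is even if all its coordinates are even. -/
def IsEvenPt {n : ℕ} (α : Fin n → ℕ) : Prop := ∀ i, Even (α i)

/-- Embedding of lattice points into `ℝⁿ`. -/
noncomputable def toR {n : ℕ} (α : Fin n → ℕ) : Fin n → ℝ := fun i => (α i : ℝ)

/-- Embedding of lattice points into `ℚⁿ`. -/
def toQ {n : ℕ} (α : Fin n → ℕ) : Fin n → ℚ := fun i => (α i : ℚ)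

/-- A trellis: a nonempty finite set of even lattice points that are affinely independent
(the vertices of a simplex). -/
def IsTrellis {n : ℕ} (A : Finset (Fin n → ℕ)) : Prop :=
  A.Nonempty ∧ (∀ α ∈ A, IsEvenPt α) ∧
    AffineIndependent ℝ (fun α : A => toR (α : Fin n → ℕ))

/-- The grid of points `u₁ + (k/q) (u₂ - u₁)`, `0 ≤ k ≤ q`, where `q` is the denominator of
`b`, has the property that every interior grid point is the average of an endpoint and
another grid point (by the doubling map `k ↦ 2k` resp. `k ↦ 2k - q`). -/
lemma grid_med {n : ℕ} (u₁ u₂ : Fin n → ℚ) (hne : u₁ ≠ u₂) (b : ℚ)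
    (hb0 : 0 ≤ b) (hb1 : b ≤ 1) :
    ∃ G : Finset (Fin n → ℚ), u₁ ∈ G ∧ u₂ ∈ G ∧ (1 - b) • u₁ + b • u₂ ∈ G ∧
      ∀ u ∈ G, u ≠ u₁ → u ≠ u₂ →
        ∃ v ∈ G, ∃ w ∈ G, v ≠ w ∧ u = (2⁻¹ : ℚ) • (v + w) := by
  set q : ℕ := b.den with hqdef
  have hq0 : (q : ℚ) ≠ 0 := Nat.cast_ne_zero.mpr b.den_ne_zero
  set d : Fin n → ℚ := u₂ - u₁ with hd
  have hdne : d ≠ 0 := sub_ne_zero.mpr (Ne.symm hne)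
  set x : ℕ → (Fin n → ℚ) := fun k => u₁ + ((k : ℚ) / q) • d with hx
  have hinj : ∀ j l : ℕ, x j = x l → j = l := by
    intro j l h
    have h1 : ((j : ℚ) / q) • d = ((l : ℚ) / q) • d := add_left_cancel h
    have h2 : ((j : ℚ) / q - (l : ℚ) / q) • d = 0 := by
      rw [sub_smul, h1, sub_self]
    rcases smul_eq_zero.mp h2 with h3 | h3
    · have h4 : (j : ℚ) / q = (l : ℚ) / q := sub_eq_zero.mp h3
      have h5 : (j : ℚ) = (l : ℚ) := by
        field_simp at h4; exact_mod_cast h4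
      exact_mod_cast h5
    · exact absurd h3 hdne
  refine ⟨(Finset.range (q + 1)).image x, ?_, ?_, ?_, ?_⟩
  · -- u₁ = x 0
    refine Finset.mem_image.mpr ⟨0, Finset.mem_range.mpr (Nat.succ_pos q), ?_⟩
    simp [hx]
  · -- u₂ = x q
    refine Finset.mem_image.mpr ⟨q, Finset.mem_range.mpr (Nat.lt_succ_self q), ?_⟩
    simp only [hx, div_self hq0, one_smul, hd]
    abel
  · -- the combination is x k₀ with k₀ = b.num.toNat
    have hnum0 : 0 ≤ b.num := Rat.num_nonneg.mpr hb0
    have hcast : ((b.num.toNat : ℕ) : ℚ) = (b.num : ℚ) := by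
      exact_mod_cast Int.toNat_of_nonneg hnum0
    have hkq : ((b.num.toNat : ℕ) : ℚ) / q = b := by
      rw [hcast, hqdef]; exact Rat.num_div_den b
    have hkle : b.num.toNat ≤ q := by
      have h1 : (b.num : ℚ) ≤ (b.den : ℚ) := by
        have h3 : (b.num : ℚ) = b * b.den :=
          (div_eq_iff (by exact_mod_cast b.den_ne_zero)).mp (Rat.num_div_den b)
        rw [h3]
        calc b * (b.den : ℚ) ≤ 1 * b.den := by
              apply mul_le_mul_of_nonneg_right hb1
              positivity
          _ = b.den := one_mul _
      have h4 : b.num ≤ (b.den : ℤ) := by exact_mod_cast h1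
      omega
    refine Finset.mem_image.mpr ⟨b.num.toNat, Finset.mem_range.mpr (by omega), ?_⟩
    rw [hx]
    simp only [hkq, hd]
    module
  · -- mediation
    intro u hu hne1 hne2
    obtain ⟨k, hkmem, rfl⟩ := Finset.mem_image.mp hu
    have hkle : k ≤ q := Nat.lt_succ_iff.mp (Finset.mem_range.mp hkmem)
    have hk0 : k ≠ 0 := by
      rintro rfl
      apply hne1
      simp [hx]
    have hkq : k ≠ q := by
      rintro rfl
      apply hne2
      simp only [hx, div_self hq0, one_smul, hd]
      abel
    by_cases h2k : 2 * k ≤ q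
    · refine ⟨x 0, ?_, x (2 * k), ?_, ?_, ?_⟩
      · exact Finset.mem_image_of_mem x (Finset.mem_range.mpr (by omega))
      · exact Finset.mem_image_of_mem x (Finset.mem_range.mpr (by omega))
      · intro h
        have := hinj _ _ h
        omega
      · show x k = (2⁻¹ : ℚ) • (x 0 + x (2 * k))
        simp only [hx]
        push_cast
        match_scalars
        · ring
        · field_simp; ring
    · push_neg at h2k
      refine ⟨x q, ?_, x (2 * k - q), ?_, ?_, ?_⟩
      · exact Finset.mem_image_of_mem x (Finset.mem_range.mpr (by omega))
      · exact Finset.mem_image_of_mem x (Finset.mem_range.mpr (by omega))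
      · intro h
        have := hinj _ _ h
        omega
      · show x k = (2⁻¹ : ℚ) • (x q + x (2 * k - q))
        simp only [hx]
        have hsub : ((2 * k - q : ℕ) : ℚ) = 2 * (k : ℚ) - q := by
          push_cast [Nat.cast_sub (le_of_lt h2k)]; ring
        push_cast [hsub]
        match_scalars
        · ring
        · field_simp; ring

/-- The set of points admitting an `S`-rational mediated set containing them. -/
def MedSet {n : ℕ} (S : Finset (Fin n → ℚ)) : Set (Fin n → ℚ) :=
  {u | ∃ M : Finset (Fin n → ℚ), IsRatMediatedSet S M ∧ u ∈ M}

lemma medSet_convex {n : ℕ} (S : Finset (Fin n → ℚ)) : Convex ℚ (MedSet S) := by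
  rintro u₁ ⟨M₁, ⟨hS₁, hm₁⟩, hu₁M⟩ u₂ ⟨M₂, ⟨hS₂, hm₂⟩, hu₂M⟩ a b ha hb hab
  by_cases hne : u₁ = u₂
  · subst hne
    have h : a • u₁ + b • u₁ = u₁ := by rw [← add_smul, hab, one_smul]
    rw [h]; exact ⟨M₁, ⟨hS₁, hm₁⟩, hu₁M⟩
  · obtain ⟨G, hG1, hG2, hGb, hGmed⟩ := grid_med u₁ u₂ hne b hb (by linarith)
    have hab' : a = 1 - b := by linarith
    refine ⟨M₁ ∪ M₂ ∪ G, ⟨?_, ?_⟩, ?_⟩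
    · exact hS₁.trans (Finset.subset_union_left.trans Finset.subset_union_left)
    · intro u hu huS
      by_cases h1 : u ∈ M₁
      · obtain ⟨v, hv, w, hw, hvw, he⟩ := hm₁ u h1 huS
        exact ⟨v, by simp [Finset.mem_union, hv], w, by simp [Finset.mem_union, hw], hvw, he⟩
      by_cases h2 : u ∈ M₂
      · obtain ⟨v, hv, w, hw, hvw, he⟩ := hm₂ u h2 huS
        exact ⟨v, by simp [Finset.mem_union, hv], w, by simp [Finset.mem_union, hw], hvw, he⟩
      have huG : u ∈ G := by
        rcases Finset.mem_union.mp hu with h | h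
        · rcases Finset.mem_union.mp h with h' | h'
          · exact absurd h' h1
          · exact absurd h' h2
        · exact h
      have hne1 : u ≠ u₁ := fun h => h1 (h ▸ hu₁M)
      have hne2 : u ≠ u₂ := fun h => h2 (h ▸ hu₂M)
      obtain ⟨v, hv, w, hw, hvw, he⟩ := hGmed u huG hne1 hne2
      exact ⟨v, by simp [Finset.mem_union, hv], w, by simp [Finset.mem_union, hw], hvw, he⟩
    · rw [hab']
      simp [Finset.mem_union, hGb]

/-- Let `𝒜` be a trellis in `ℕⁿ` and let `β` be a lattice point in the
relative interior of the convex hull of `𝒜`. Then there exists an `𝒜`-rational mediated set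
`M` containing `β`. -/
theorem exists_ratMediatedSet_of_trellis {n : ℕ} (A : Finset (Fin n → ℕ)) (hA : IsTrellis A)
    (β : Fin n → ℕ)
    (hβ : toR β ∈ intrinsicInterior ℝ (convexHull ℝ (toR '' (A : Set (Fin n → ℕ))))) :
    ∃ M : Finset (Fin n → ℚ), IsRatMediatedSet (A.image toQ) M ∧ toQ β ∈ M := by
  classical
  obtain ⟨hAne, -, hAI⟩ := hA
  -- Step 1: real convex combination with weights indexed by `A`.
  have hhull : toR β ∈ convexHull ℝ (toR '' (A : Set (Fin n → ℕ))) :=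
    intrinsicInterior_subset hβ
  have htoR_inj : ∀ x ∈ A, ∀ y ∈ A, toR x = toR y → x = y := by
    intro x _ y _ h
    funext i
    exact Nat.cast_injective (congrFun h i)
  rw [show toR '' (A : Set (Fin n → ℕ)) = ↑(A.image toR) from (Finset.coe_image).symm,
    Finset.convexHull_eq, Set.mem_setOf_eq] at hhull
  obtain ⟨w, hw0, hw1, hwc⟩ := hhull
  rw [Finset.centerMass_eq_of_sum_1 _ _ hw1, Finset.sum_image htoR_inj] at hwc
  rw [Finset.sum_image htoR_inj] at hw1
  simp only [id] at hwc
  -- weights on the subtype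
  set W : A → ℝ := fun a => w (toR (a : Fin n → ℕ)) with hWdef
  have hW1 : ∑ a : A, W a = 1 := by
    rw [Finset.univ_eq_attach, Finset.sum_attach A (fun α => w (toR α))]; exact hw1
  have hWc : ∑ a : A, W a • toR (a : Fin n → ℕ) = toR β := by
    rw [Finset.univ_eq_attach, Finset.sum_attach A (fun α => w (toR α) • toR α)]; exact hwc
  obtain ⟨α₀, hα₀⟩ := hAne
  set a₀ : A := (⟨α₀, hα₀⟩ : A) with ha₀def
  -- Step 2: rationality of the barycentric representation, via a dual functional.
  have hspan : toQ β - toQ α₀ ∈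
      Submodule.span ℚ (Set.range fun a : A => toQ (a : Fin n → ℕ) - toQ α₀) := by
    by_contra hns
    obtain ⟨f, hf0, hfbot⟩ := Submodule.exists_dual_map_eq_bot_of_notMem hns inferInstance
    have hker : ∀ y ∈ Submodule.span ℚ (Set.range fun a : A => toQ (a : Fin n → ℕ) - toQ α₀),
        f y = 0 := by
      intro y hy
      have h := Submodule.mem_map_of_mem (f := f) hy
      rw [hfbot, Submodule.mem_bot] at h
      exact h
    set c : Fin n → ℚ := fun i => f ((Pi.single i (1 : ℚ) : Fin n → ℚ)) with hc
    have hfc : ∀ y : Fin n → ℚ, f y = ∑ i, y i * c i := by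
      intro y
      have hy : y = ∑ i, y i • (Pi.single i (1 : ℚ) : Fin n → ℚ) := by
        funext j
        rw [Finset.sum_apply]
        simp [Pi.single_apply]
      calc f y = f (∑ i, y i • (Pi.single i (1 : ℚ) : Fin n → ℚ)) := by rw [← hy]
        _ = ∑ i, y i • f ((Pi.single i (1 : ℚ) : Fin n → ℚ)) := by rw [map_sum]; simp
        _ = ∑ i, y i * c i := by simp [hc, smul_eq_mul]
    -- the real-coefficients functional, applied to lattice points
    have key : ∀ γ : Fin n → ℕ, ∑ i, (c i : ℝ) * ((toR γ - toR α₀) i)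
        = ((f (toQ γ - toQ α₀) : ℚ) : ℝ) := by
      intro γ
      rw [hfc]
      push_cast
      refine Finset.sum_congr rfl fun i _ => ?_
      simp only [Pi.sub_apply, toR, toQ]
      push_cast
      ring
    have hreal : toR β - toR α₀ = ∑ a : A, W a • (toR (a : Fin n → ℕ) - toR α₀) := by
      simp only [smul_sub, Finset.sum_sub_distrib, hWc, ← Finset.sum_smul, hW1, one_smul]
    have hz : ∀ a : A, f (toQ (a : Fin n → ℕ) - toQ α₀) = 0 := fun a =>
      hker _ (Submodule.subset_span ⟨a, rfl⟩)
    have hzero : ((f (toQ β - toQ α₀) : ℚ) : ℝ) = 0 := by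
      rw [← key β, hreal]
      calc ∑ i, (c i : ℝ) * ((∑ a : A, W a • (toR (a : Fin n → ℕ) - toR α₀)) i)
          = ∑ i, ∑ a : A, W a * ((c i : ℝ) * ((toR (a : Fin n → ℕ) - toR α₀) i)) := by
            refine Finset.sum_congr rfl fun i _ => ?_
            rw [Finset.sum_apply, Finset.mul_sum]
            refine Finset.sum_congr rfl fun a _ => ?_
            simp only [Pi.smul_apply, smul_eq_mul]
            ring
        _ = ∑ a : A, W a * ∑ i, (c i : ℝ) * ((toR (a : Fin n → ℕ) - toR α₀) i) := by
            rw [Finset.sum_comm]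
            exact Finset.sum_congr rfl fun a _ => (Finset.mul_sum _ _ _).symm
        _ = 0 := by
            refine Finset.sum_eq_zero fun a _ => ?_
            rw [key, hz]
            simp
    exact hf0 (by exact_mod_cast hzero)
  rw [Submodule.mem_span_range_iff_exists_fun] at hspan
  obtain ⟨qc, hqc⟩ := hspan
  set s : ℚ := ∑ a : A, qc a with hs
  set μ : A → ℚ := fun a => qc a + (if a = a₀ then 1 - s else 0) with hμ
  have hμ1 : ∑ a : A, μ a = 1 := by
    have h : ∑ a : A, μ a = (∑ a : A, qc a) + ∑ a : A, (if a = a₀ then 1 - s else 0) := by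
      rw [← Finset.sum_add_distrib]
    rw [h, Finset.sum_ite_eq' Finset.univ a₀ (fun _ => 1 - s), ← hs]
    simp
  have hqc' : ∑ a : A, qc a • toQ (a : Fin n → ℕ) = toQ β - toQ α₀ + s • toQ α₀ := by
    have h := hqc
    simp only [smul_sub, Finset.sum_sub_distrib, ← Finset.sum_smul, ← hs] at h
    exact eq_add_of_sub_eq h
  have hμc : ∑ a : A, μ a • toQ (a : Fin n → ℕ) = toQ β := by
    have h1 : ∀ a : A, μ a • toQ (a : Fin n → ℕ)
        = qc a • toQ (a : Fin n → ℕ) + (if a = a₀ then (1 - s) • toQ (a : Fin n → ℕ) else 0) := by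
      intro a
      rw [hμ]
      by_cases h : a = a₀ <;> simp [h, add_smul]
    rw [Finset.sum_congr rfl fun a _ => h1 a, Finset.sum_add_distrib,
      Finset.sum_ite_eq' Finset.univ a₀ (fun a => (1 - s) • toQ (a : Fin n → ℕ)), hqc']
    simp only [Finset.mem_univ, if_true, ha₀def]
    module
  -- Step 3: nonnegativity of the rational weights, by uniqueness of barycentric coordinates.
  set ν : A → ℝ := fun a => ((μ a : ℚ) : ℝ) with hν
  have hν1 : ∑ a : A, ν a = 1 := by
    have h : ((∑ a : A, μ a : ℚ) : ℝ) = 1 := by rw [hμ1]; norm_num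
    push_cast at h
    exact h
  have hνc : ∑ a : A, ν a • toR (a : Fin n → ℕ) = toR β := by
    funext i
    have hi := congrFun hμc i
    simp only [Finset.sum_apply, Pi.smul_apply, toQ, smul_eq_mul] at hi
    simp only [Finset.sum_apply, Pi.smul_apply, toR, smul_eq_mul, hν]
    exact_mod_cast hi
  have huniq : W = ν := by
    have h := (affineIndependent_iff_eq_of_fintype_affineCombination_eq ℝ
      (fun a : A => toR (a : Fin n → ℕ))).mp hAI W ν hW1 hν1 ?_
    · exact h
    · rw [affineCombination_eq_centerMass hW1, affineCombination_eq_centerMass hν1,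
        Finset.centerMass_eq_of_sum_1 _ _ hW1, Finset.centerMass_eq_of_sum_1 _ _ hν1,
        hWc, hνc]
  have hμ0 : ∀ a : A, 0 ≤ μ a := by
    intro a
    have h1 : (0 : ℝ) ≤ ((μ a : ℚ) : ℝ) := by
      rw [show ((μ a : ℚ) : ℝ) = ν a from rfl, ← huniq]
      exact hw0 _ (Finset.mem_image_of_mem toR a.2)
    exact_mod_cast h1
  -- Step 4: conclude by convexity of the set of mediated points.
  have hmem : toQ β ∈ MedSet (A.image toQ) := by
    rw [← hμc]
    refine (medSet_convex (A.image toQ)).sum_mem (fun a _ => hμ0 a) hμ1 (fun a _ => ?_)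
    exact ⟨A.image toQ, ⟨Finset.Subset.refl _, fun u hu huS => absurd hu huS⟩,
      Finset.mem_image_of_mem toQ a.2⟩
  obtain ⟨M, hM, hβM⟩ := hmem
  exact ⟨M, hM, hβM⟩
end

section
/- Let 𝒜 = {α₁,…,α_m} be a trellis in ℕⁿ and let β be a lattice point in the relative interior of the convex hull of 𝒜. Then there exists an 𝒜-rational mediated set M containing β such that every coordinate of every point of M has odd denominator and every coordinate of every point of M \ {β} has even numerator. -/
/-- `q` has odd denominator. -/
def ODQ (q : ℚ) : Prop := ∃ (z : ℤ) (d : ℕ), Odd d ∧ q * d = z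

/-- `q` has odd denominator and even numerator. -/
def EVQ (q : ℚ) : Prop := ∃ (z : ℤ) (d : ℕ), Odd d ∧ q * d = 2 * z

lemma odd_cast_ne_zero {d : ℕ} (hd : Odd d) : (d : ℚ) ≠ 0 := by
  have : d ≠ 0 := by rintro rfl; simp [Nat.odd_iff] at hd
  exact_mod_cast this

lemma EVQ.odq {q : ℚ} (h : EVQ q) : ODQ q := by
  obtain ⟨z, d, hd, hq⟩ := h
  exact ⟨2 * z, d, hd, by push_cast; linarith⟩

lemma ODQ.odd_den {q : ℚ} (h : ODQ q) : Odd q.den := by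
  obtain ⟨z, d, hd, hq⟩ := h
  have hint : (q.num : ℚ) * d = z * q.den := by
    have h1 : (q.num : ℚ) = q * q.den := by rw [Rat.mul_den_eq_num]
    calc (q.num : ℚ) * d = (q * d) * q.den := by rw [h1]; ring
    _ = (z : ℚ) * q.den := by rw [hq]
  have hint' : q.num * (d : ℤ) = z * (q.den : ℤ) := by exact_mod_cast hint
  have hdvd : (q.den : ℤ) ∣ q.num * d := ⟨z, by linarith⟩
  have hdvd2 : q.den ∣ q.num.natAbs * d := by
    have := Int.natAbs_dvd_natAbs.mpr hdvd
    simpa [Int.natAbs_mul] using this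
  have hdvd3 : q.den ∣ d :=
    (Nat.Coprime.dvd_of_dvd_mul_left (q.reduced.symm) hdvd2)
  rcases hdvd3 with ⟨t, ht⟩
  rcases Nat.even_or_odd q.den with he | ho
  · exfalso
    have : Even d := ht ▸ he.mul_right t
    simp [Nat.even_iff, Nat.odd_iff] at this hd; omega
  · exact ho

lemma ODQ.int_mul {q : ℚ} (h : ODQ q) (k : ℤ) : ODQ ((k : ℚ) * q) := by
  obtain ⟨z, d, hd, hq⟩ := h
  exact ⟨k * z, d, hd, by rw [mul_assoc, hq]; push_cast; ring⟩

lemma ODQ.sub {a b : ℚ} (ha : ODQ a) (hb : ODQ b) : ODQ (a - b) := by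
  obtain ⟨z1, d1, hd1, h1⟩ := ha
  obtain ⟨z2, d2, hd2, h2⟩ := hb
  refine ⟨z1 * d2 - z2 * d1, d1 * d2, hd1.mul hd2, ?_⟩
  push_cast
  calc (a - b) * (d1 * d2) = (a * d1) * d2 - (b * d2) * d1 := by ring
  _ = (z1 : ℚ) * d2 - z2 * d1 := by rw [h1, h2]

lemma EVQ.sub {a b : ℚ} (ha : EVQ a) (hb : EVQ b) : EVQ (a - b) := by
  obtain ⟨z1, d1, hd1, h1⟩ := ha
  obtain ⟨z2, d2, hd2, h2⟩ := hb
  refine ⟨z1 * d2 - z2 * d1, d1 * d2, hd1.mul hd2, ?_⟩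
  push_cast
  calc (a - b) * (d1 * d2) = (a * d1) * d2 - (b * d2) * d1 := by ring
  _ = 2 * ((z1 : ℚ) * d2 - z2 * d1) := by rw [h1, h2]; push_cast; ring

lemma EVQ.two_mul_of_odq {q : ℚ} (h : ODQ q) : EVQ (2 * q) := by
  obtain ⟨z, d, hd, hq⟩ := h
  exact ⟨z, d, hd, by rw [mul_assoc, hq]⟩

lemma ODQ.intCast (z : ℤ) : ODQ (z : ℚ) := ⟨z, 1, odd_one, by norm_num⟩

lemma ODQ.natCast (m : ℕ) : ODQ (m : ℚ) := by exact_mod_cast ODQ.intCast m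

lemma EVQ.even_num {q : ℚ} (h : EVQ q) : Even q.num := by
  obtain ⟨z, d, hd, hq⟩ := h
  have hd0 : (d : ℚ) ≠ 0 := odd_cast_ne_zero hd
  have hint : (q.num : ℚ) * d = 2 * z * q.den := by
    have h1 : (q.num : ℚ) = q * q.den := by rw [Rat.mul_den_eq_num]
    calc (q.num : ℚ) * d = (q * d) * q.den := by rw [h1]; ring
    _ = 2 * z * q.den := by rw [hq]
  have hint' : q.num * (d : ℤ) = 2 * z * (q.den : ℤ) := by exact_mod_cast hint
  have h2 : (2 : ℤ) ∣ q.num * d := ⟨z * q.den, by linarith⟩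
  rcases (Int.Prime.dvd_mul' (by norm_num : Nat.Prime 2) h2) with h | h
  · exact even_iff_two_dvd.mpr h
  · exfalso
    have : Even d := by
      have : (2:ℤ) ∣ (d:ℤ) := h
      have : (2:ℕ) ∣ d := by exact_mod_cast this
      exact even_iff_two_dvd.mpr this
    simp [Nat.even_iff, Nat.odd_iff] at this hd; omega

/-- even natural over odd natural. -/
lemma EVQ.of_even_div {N D : ℕ} (hD : Odd D) (hN : Even N) : EVQ ((N : ℚ) / D) := by
  obtain ⟨m, hm⟩ := hN
  refine ⟨m, D, hD, ?_⟩
  have hD0 : (D : ℚ) ≠ 0 := odd_cast_ne_zero hD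
  field_simp
  push_cast [hm]; ring

lemma exists_pow_odq (q : ℚ) : ∃ j : ℕ, ODQ (2 ^ j * q) := by
  set k := q.den.factorization 2 with hk
  refine ⟨k, q.num, q.den / 2 ^ k, ?_, ?_⟩
  · have h2 : ¬ 2 ∣ q.den / 2 ^ k := Nat.not_dvd_ordCompl Nat.prime_two q.den_nz
    rw [← Nat.not_even_iff_odd, even_iff_two_dvd]
    exact h2
  · have hdvd : 2 ^ k ∣ q.den := Nat.ordProj_dvd _ _
    have hmul : 2 ^ k * (q.den / 2 ^ k) = q.den := Nat.ordProj_mul_ordCompl_eq_self _ _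
    have : (2:ℚ) ^ k * q * ((q.den / 2 ^ k : ℕ) : ℚ) = q * q.den := by
      rw [mul_assoc, mul_comm q _, ← mul_assoc]
      norm_cast
      rw [hmul]
      ring
    rw [this, Rat.mul_den_eq_num]

lemma odq_pow_mono {q : ℚ} {j J : ℕ} (h : ODQ (2 ^ j * q)) (hjJ : j ≤ J) : ODQ (2 ^ J * q) := by
  have : (2:ℚ) ^ J * q = ((2 ^ (J - j) : ℤ) : ℚ) * (2 ^ j * q) := by
    push_cast
    rw [← mul_assoc, ← pow_add]
    congr 2
    omega
  rw [this]
  exact h.int_mul _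


open Finset

variable {n : ℕ}

/-- The point of `ℚⁿ` with barycentric-like weights `l` over `A`. -/
noncomputable def ptA (A : Finset (Fin n → ℕ)) (l : (Fin n → ℕ) → ℚ) : Fin n → ℚ :=
  fun i => ∑ α ∈ A, l α * (α i : ℚ)

/-- The grid of all rational points with weights `c/D`, `c` naturals summing to `D`. -/
noncomputable def gridA (A : Finset (Fin n → ℕ)) (D : ℕ) : Finset (Fin n → ℚ) := by
  classical
  exact (Finset.finsuppAntidiag A D).image (fun c => ptA A (fun α => (c α : ℚ) / D))

lemma ptA_mem_gridA {A : Finset (Fin n → ℕ)} {D : ℕ} (c : (Fin n → ℕ) → ℕ)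
    (hsum : ∑ α ∈ A, c α = D) :
    ptA A (fun α => (c α : ℚ) / D) ∈ gridA A D := by
  classical
  unfold gridA
  refine Finset.mem_image.mpr
    ⟨Finsupp.onFinset A (fun α => if α ∈ A then c α else 0) (fun a ha => by
        by_contra h; simp [h] at ha), ?_, ?_⟩
  · rw [Finset.mem_finsuppAntidiag]
    refine ⟨?_, Finsupp.support_onFinset_subset⟩
    rw [← hsum]
    apply Finset.sum_congr rfl
    intro a ha
    simp [Finsupp.onFinset_apply, ha]
  · unfold ptA
    funext i
    apply Finset.sum_congr rfl
    intro a ha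
    simp [Finsupp.onFinset_apply, ha]

lemma gridA_parity {A : Finset (Fin n → ℕ)} (hAev : ∀ α ∈ A, ∀ i, Even (α i)) {D : ℕ}
    (hD : Odd D) {p : Fin n → ℚ} (hp : p ∈ gridA A D) : ∀ i, EVQ (p i) := by
  classical
  unfold gridA at hp
  obtain ⟨c, _, rfl⟩ := Finset.mem_image.mp hp
  intro i
  have hrw : ptA A (fun α => (c α : ℚ) / D) i = ((∑ α ∈ A, c α * α i : ℕ) : ℚ) / D := by
    unfold ptA
    push_cast
    rw [Finset.sum_div]
    apply Finset.sum_congr rfl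
    intro a _
    ring
  rw [hrw]
  refine EVQ.of_even_div hD (even_iff_two_dvd.mpr (Finset.dvd_sum ?_))
  intro α hα
  exact Dvd.dvd.mul_left (even_iff_two_dvd.mp (hAev α hα i)) _

lemma sum_single_weight {A : Finset (Fin n → ℕ)} {γ : Fin n → ℕ} (hγ : γ ∈ A)
    (g : (Fin n → ℕ) → ℚ) :
    ∑ α ∈ A, ((Finsupp.single γ (1:ℕ)) α : ℚ) * g α = g γ := by
  classical
  rw [Finset.sum_eq_single_of_mem γ hγ]
  · simp
  · intro b _ hbγ
    simp [Finsupp.single_apply, Ne.symm hbγ]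

lemma gridA_mediated {A : Finset (Fin n → ℕ)} {D : ℕ} (hD : Odd D) {p : Fin n → ℚ}
    (hp : p ∈ gridA A D) (hpA : p ∉ A.image toQ) :
    ∃ v ∈ gridA A D, ∃ w ∈ gridA A D, v ≠ w ∧ p = (2⁻¹ : ℚ) • (v + w) := by
  classical
  have hD0 : D ≠ 0 := by rintro rfl; simp [Nat.odd_iff] at hD
  have hDQ : (D : ℚ) ≠ 0 := by exact_mod_cast hD0
  unfold gridA at hp
  obtain ⟨c, hc, rfl⟩ := Finset.mem_image.mp hp
  rw [Finset.mem_finsuppAntidiag] at hc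
  obtain ⟨hcsum, hcsupp⟩ := hc
  -- some vertex with positive weight
  obtain ⟨α₀, hα₀A, hα₀⟩ : ∃ α₀ ∈ A, c α₀ ≠ 0 := by
    apply Finset.exists_ne_zero_of_sum_ne_zero
    rw [hcsum]; exact_mod_cast hD0
  by_cases hone : ∃ α₁ ∈ A, α₁ ≠ α₀ ∧ c α₁ ≠ 0
  · obtain ⟨α₁, hα₁A, hα₁ne, hα₁⟩ := hone
    set b : (Fin n → ℕ) →₀ ℕ := c - Finsupp.single α₀ 1 - Finsupp.single α₁ 1 with hb
    have key : ∀ α, c α = b α + (Finsupp.single α₀ (1:ℕ)) α + (Finsupp.single α₁ (1:ℕ)) α := by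
      intro α
      have h0 : (Finsupp.single α₀ (1:ℕ)) α = if α₀ = α then 1 else 0 := Finsupp.single_apply
      have h1 : (Finsupp.single α₁ (1:ℕ)) α = if α₁ = α then 1 else 0 := Finsupp.single_apply
      have hbα : b α = c α - (Finsupp.single α₀ (1:ℕ)) α - (Finsupp.single α₁ (1:ℕ)) α := by
        simp [hb, Finsupp.coe_tsub]
      rw [hbα, h0, h1]
      by_cases e0 : α₀ = α <;> by_cases e1 : α₁ = α
      · exact absurd (e1.trans e0.symm) hα₁ne
      · subst e0; simp [e1]; omega
      · subst e1; simp [e0]; omega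
      · simp [e0, e1]
    have sum_single_nat : ∀ γ ∈ A, (∑ α ∈ A, ((Finsupp.single γ (1:ℕ)) α)) = 1 := by
      intro γ hγ
      rw [Finset.sum_eq_single_of_mem γ hγ]
      · simp
      · intro b _ hbγ
        simp [Finsupp.single_apply, Ne.symm hbγ]
    have hsb : (∑ α ∈ A, b α) + 2 = D := by
      have h1 : ∑ α ∈ A, c α = (∑ α ∈ A, b α) + (∑ α ∈ A, (Finsupp.single α₀ (1:ℕ)) α)
          + (∑ α ∈ A, (Finsupp.single α₁ (1:ℕ)) α) := by
        rw [← Finset.sum_add_distrib, ← Finset.sum_add_distrib]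
        exact Finset.sum_congr rfl (fun α _ => key α)
      rw [sum_single_nat α₀ hα₀A, sum_single_nat α₁ hα₁A] at h1
      have hcsum' : ∑ α ∈ A, c α = D := hcsum
      rw [hcsum'] at h1
      omega
    set cp : (Fin n → ℕ) → ℕ := fun α => b α + 2 * (Finsupp.single α₁ (1:ℕ)) α with hcp
    set cm : (Fin n → ℕ) → ℕ := fun α => b α + 2 * (Finsupp.single α₀ (1:ℕ)) α with hcm
    have hcpsum : ∑ α ∈ A, cp α = D := by
      simp only [hcp]
      rw [Finset.sum_add_distrib, ← Finset.mul_sum, sum_single_nat α₁ hα₁A]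
      omega
    have hcmsum : ∑ α ∈ A, cm α = D := by
      simp only [hcm]
      rw [Finset.sum_add_distrib, ← Finset.mul_sum, sum_single_nat α₀ hα₀A]
      omega
    set v := ptA A (fun α => (cp α : ℚ) / D) with hv
    set w := ptA A (fun α => (cm α : ℚ) / D) with hw
    refine ⟨v, ptA_mem_gridA cp hcpsum, w, ptA_mem_gridA cm hcmsum, ?_, ?_⟩
    · -- v ≠ w
      obtain ⟨i, hi⟩ := Function.ne_iff.mp hα₁ne
      intro hvw
      have hdiff : v i - w i = 2 / D * (α₁ i : ℚ) - 2 / D * (α₀ i : ℚ) := by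
        rw [hv, hw]
        unfold ptA
        rw [← Finset.sum_sub_distrib]
        have : ∀ α ∈ A, (cp α : ℚ) / D * α i - (cm α : ℚ) / D * α i
            = ((Finsupp.single α₁ (1:ℕ)) α : ℚ) * (2 / D * α i)
              - ((Finsupp.single α₀ (1:ℕ)) α : ℚ) * (2 / D * α i) := by
          intro α _
          simp only [hcp, hcm]
          push_cast
          ring
        rw [Finset.sum_congr rfl this, Finset.sum_sub_distrib,
          sum_single_weight hα₁A, sum_single_weight hα₀A]
      rw [hvw, sub_self] at hdiff
      have hDQ : (D : ℚ) ≠ 0 := odd_cast_ne_zero hD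
      have : (α₁ i : ℚ) = (α₀ i : ℚ) := by
        field_simp at hdiff
        linarith
      exact hi (by exact_mod_cast this)
    · -- midpoint
      funext i
      have hterm : ∀ α, cp α + cm α = 2 * c α := by
        intro α
        have h := key α
        simp only [hcp, hcm]
        omega
      have hsum2 : v i + w i = 2 * ptA A (fun α => (c α : ℚ) / D) i := by
        rw [hv, hw]
        unfold ptA
        rw [← Finset.sum_add_distrib, Finset.mul_sum]
        apply Finset.sum_congr rfl
        intro α _
        have := hterm α
        have hq : (cp α : ℚ) + cm α = 2 * c α := by exact_mod_cast this
        linear_combination ((α i : ℚ) / D) * hq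
      have hsmul : ((2⁻¹ : ℚ) • (v + w)) i = (2⁻¹ : ℚ) * (v i + w i) := by
        simp [Pi.smul_apply, Pi.add_apply, smul_eq_mul]
      rw [hsmul, hsum2]
      ring
  · -- single vertex: p = toQ α₀, contradiction
    exfalso
    apply hpA
    push_neg at hone
    have hcα₀ : c α₀ = D := by
      rw [← hcsum]
      rw [Finset.sum_eq_single_of_mem α₀ hα₀A]
      intro b hbA hbne
      exact hone b hbA hbne
    have : ptA A (fun α => (c α : ℚ) / D) = toQ α₀ := by
      funext i
      unfold ptA toQ
      rw [Finset.sum_eq_single_of_mem α₀ hα₀A]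
      · show (c α₀ : ℚ) / D * (α₀ i : ℚ) = (α₀ i : ℚ)
        rw [hcα₀]
        have hD0 : (D : ℚ) ≠ 0 := odd_cast_ne_zero hD
        field_simp
      · intro b hbA hbne
        show (c b : ℚ) / D * (b i : ℚ) = 0
        rw [hone b hbA hbne]
        simp
    rw [this]
    exact Finset.mem_image_of_mem _ hα₀A



lemma toQ_parity {α : Fin n → ℕ} (hα : ∀ i, Even (α i)) : ∀ i, EVQ (toQ α i) := by
  intro i
  obtain ⟨m, hm⟩ := hα i
  exact ⟨m, 1, odd_one, by unfold toQ; push_cast [hm]; ring⟩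

lemma grid_case (A : Finset (Fin n → ℕ)) (hAev : ∀ α ∈ A, ∀ i, Even (α i)) {D : ℕ}
    (hD : Odd D) {p : Fin n → ℚ} (hp : p ∈ gridA A D) :
    ∃ M : Finset (Fin n → ℚ), A.image toQ ⊆ M ∧ p ∈ M ∧
      (∀ u ∈ M, ∀ i, ODQ (u i)) ∧ (∀ u ∈ M, u ≠ p → ∀ i, EVQ (u i)) ∧
      (∀ u ∈ M, u ∉ A.image toQ → ∃ v ∈ M, ∃ w ∈ M, v ≠ w ∧ u = (2⁻¹ : ℚ) • (v + w)) := by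
  classical
  have hEV : ∀ u ∈ gridA A D ∪ A.image toQ, ∀ i, EVQ (u i) := by
    intro u hu i
    rcases Finset.mem_union.mp hu with hg | him
    · exact gridA_parity hAev hD hg i
    · obtain ⟨α, hαA, rfl⟩ := Finset.mem_image.mp him
      exact toQ_parity (hAev α hαA) i
  refine ⟨gridA A D ∪ A.image toQ, Finset.subset_union_right,
    Finset.mem_union_left _ hp, fun u hu i => (hEV u hu i).odq, fun u hu _ i => hEV u hu i, ?_⟩
  intro u hu huA
  rcases Finset.mem_union.mp hu with hg | him
  · obtain ⟨v, hv, w, hw, hne, heq⟩ := gridA_mediated hD hg huA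
    exact ⟨v, Finset.mem_union_left _ hv, w, Finset.mem_union_left _ hw, hne, heq⟩
  · exact absurd him huA

lemma exists_common_odd_den (A : Finset (Fin n → ℕ)) (f : (Fin n → ℕ) → ℚ)
    (hOD : ∀ α ∈ A, ODQ (f α)) (hnn : ∀ α ∈ A, 0 ≤ f α) :
    ∃ (d : ℕ) (c : (Fin n → ℕ) → ℕ), Odd d ∧ ∀ α ∈ A, (c α : ℚ) = f α * d := by
  classical
  induction A using Finset.induction_on with
  | empty => exact ⟨1, fun _ => 0, odd_one, by simp⟩
  | @insert a s ha ih =>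
    obtain ⟨d, c, hd, hc⟩ := ih (fun α hα => hOD α (Finset.mem_insert_of_mem hα))
      (fun α hα => hnn α (Finset.mem_insert_of_mem hα))
    obtain ⟨z, da, hda, hza⟩ := hOD a (Finset.mem_insert_self a s)
    have hda0 : (da : ℚ) ≠ 0 := odd_cast_ne_zero hda
    have hz0 : 0 ≤ z := by
      have h1 : (0:ℚ) ≤ f a * da := by
        apply mul_nonneg (hnn a (Finset.mem_insert_self a s))
        positivity
      rw [hza] at h1
      exact_mod_cast h1
    refine ⟨d * da, fun α => if α = a then z.toNat * d else c α * da, hd.mul hda, ?_⟩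
    intro α hα
    rcases Finset.mem_insert.mp hα with rfl | hαs
    · simp only [if_pos rfl]
      have hzq : ((z.toNat : ℕ) : ℚ) = ((z : ℤ) : ℚ) := by
        exact_mod_cast Int.toNat_of_nonneg hz0
      push_cast
      rw [hzq, ← hza]
      ring
    · have hαa : α ≠ a := by rintro rfl; exact ha hαs
      simp only [if_neg hαa]
      push_cast
      rw [hc α hαs]
      ring

lemma exists_sub_sum (s : Finset (Fin n → ℕ)) (g : (Fin n → ℕ) → ℕ) :
    ∀ (K : ℕ), K ≤ ∑ α ∈ s, g α →
      ∃ τ : (Fin n → ℕ) → ℕ, (∀ a, τ a ≤ g a) ∧ ∑ α ∈ s, τ α = K := by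
  classical
  induction s using Finset.induction_on with
  | empty => intro K hK; exact ⟨fun _ => 0, fun _ => Nat.zero_le _, by simpa using (by simpa using hK : K ≤ 0).antisymm (Nat.zero_le _) |>.symm⟩
  | @insert a s ha ih =>
    intro K hK
    rw [Finset.sum_insert ha] at hK
    obtain ⟨τ, hτle, hτsum⟩ := ih (K - min (g a) K) (by omega)
    refine ⟨Function.update τ a (min (g a) K), ?_, ?_⟩
    · intro b
      by_cases hb : b = a
      · subst hb; rw [Function.update_self]; exact min_le_left _ _
      · rw [Function.update_of_ne hb]; exact hτle b
    · rw [Finset.sum_insert ha, Function.update_self]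
      have : ∑ α ∈ s, Function.update τ a (min (g a) K) α = ∑ α ∈ s, τ α := by
        apply Finset.sum_congr rfl
        intro b hb
        exact Function.update_of_ne (by rintro rfl; exact ha hb) _ _
      rw [this, hτsum]
      omega

lemma descent (A : Finset (Fin n → ℕ)) (hAev : ∀ α ∈ A, ∀ i, Even (α i)) :
    ∀ (j : ℕ) (l : (Fin n → ℕ) → ℚ),
      (∀ α ∈ A, 0 ≤ l α) → ((∑ α ∈ A, l α) = 1) →
      (∀ α ∈ A, ODQ (2 ^ j * l α)) → (∀ i, ODQ (ptA A l i)) →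
      ∃ M : Finset (Fin n → ℚ),
        A.image toQ ⊆ M ∧ ptA A l ∈ M ∧
        (∀ u ∈ M, ∀ i, ODQ (u i)) ∧
        (∀ u ∈ M, u ≠ ptA A l → ∀ i, EVQ (u i)) ∧
        (∀ u ∈ M, u ∉ A.image toQ → ∃ v ∈ M, ∃ w ∈ M, v ≠ w ∧ u = (2⁻¹ : ℚ) • (v + w)) := by
  classical
  intro j
  induction j with
  | zero =>
    intro l hnn hsum hlev hptOD
    obtain ⟨d, c, hd, hcval⟩ := exists_common_odd_den A l
      (fun α hα => by simpa using hlev α hα) hnn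
    have hd0 : (d : ℚ) ≠ 0 := odd_cast_ne_zero hd
    have hcsum : ∑ α ∈ A, c α = d := by
      have h1 : ((∑ α ∈ A, c α : ℕ) : ℚ) = ((d : ℕ) : ℚ) := by
        push_cast
        rw [Finset.sum_congr rfl (fun α hα => hcval α hα), ← Finset.sum_mul, hsum, one_mul]
      exact_mod_cast h1
    have hpt : ptA A l = ptA A (fun α => (c α : ℚ) / d) := by
      funext i
      unfold ptA
      apply Finset.sum_congr rfl
      intro α hα
      show l α * (α i : ℚ) = (c α : ℚ) / d * (α i : ℚ)
      rw [hcval α hα]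
      field_simp
    have hmem : ptA A l ∈ gridA A d := by
      rw [hpt]; exact ptA_mem_gridA c hcsum
    exact grid_case A hAev hd hmem
  | succ j ih =>
    intro l hnn hsum hlev hptOD
    obtain ⟨d, cf, hd, hcf⟩ := exists_common_odd_den A (fun α => 2 ^ (j + 1) * l α) hlev
      (fun α hα => mul_nonneg (by positivity) (hnn α hα))
    have hdn0 : d ≠ 0 := by rintro rfl; simp [Nat.odd_iff] at hd
    set E : ℕ := 2 * A.card + 1 with hE
    have hEodd : Odd E := ⟨A.card, by omega⟩
    set D : ℕ := d * E with hD
    have hDodd : Odd D := hd.mul hEodd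
    have hDn0 : D ≠ 0 := by rintro h; simp [Nat.odd_iff, h] at hDodd
    have hDQ0 : (D : ℚ) ≠ 0 := odd_cast_ne_zero hDodd
    have h2jpos : 0 < 2 ^ j := Nat.pow_pos (by norm_num)
    set g : (Fin n → ℕ) → ℕ := fun α => cf α * E / 2 ^ j with hg
    have hcfsum : ∑ α ∈ A, cf α = 2 ^ (j + 1) * d := by
      have h1 : ((∑ α ∈ A, cf α : ℕ) : ℚ) = ((2 ^ (j + 1) * d : ℕ) : ℚ) := by
        push_cast
        rw [Finset.sum_congr rfl (fun α hα => hcf α hα)]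
        rw [show (∑ α ∈ A, 2 ^ (j+1) * l α * (d:ℚ)) = (∑ α ∈ A, l α) * (2 ^ (j+1) * d) by
          rw [Finset.sum_mul]; apply Finset.sum_congr rfl; intro α _; ring]
        rw [hsum, one_mul]
      exact_mod_cast h1
    -- feasibility
    have hfeas : D ≤ ∑ α ∈ A, g α := by
      by_contra hlt
      push_neg at hlt
      have hub : ∀ α ∈ A, cf α * E ≤ 2 ^ j * g α + (2 ^ j - 1) := by
        intro α _
        have hdm := Nat.div_add_mod (cf α * E) (2 ^ j)
        have hm := Nat.mod_lt (cf α * E) h2jpos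
        simp only [hg]
        omega
      have hsum1 : ∑ α ∈ A, cf α * E ≤ ∑ α ∈ A, (2 ^ j * g α + (2 ^ j - 1)) :=
        Finset.sum_le_sum hub
      rw [← Finset.sum_mul, hcfsum, Finset.sum_add_distrib, ← Finset.mul_sum,
        Finset.sum_const, smul_eq_mul] at hsum1
      have hkey : 2 ^ j * (2 * (d * E)) ≤ 2 ^ j * ((∑ α ∈ A, g α) + A.card) :=
        calc 2 ^ j * (2 * (d * E)) = 2 ^ (j + 1) * d * E := by ring
        _ ≤ 2 ^ j * (∑ α ∈ A, g α) + A.card * (2 ^ j - 1) := hsum1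
        _ ≤ 2 ^ j * (∑ α ∈ A, g α) + 2 ^ j * A.card := by
            have h9 : A.card * (2 ^ j - 1) ≤ 2 ^ j * A.card := by
              rw [mul_comm]
              exact Nat.mul_le_mul (Nat.sub_le _ _) le_rfl
            omega
        _ = 2 ^ j * ((∑ α ∈ A, g α) + A.card) := by ring
      have h2dE : 2 * (d * E) ≤ (∑ α ∈ A, g α) + A.card :=
        Nat.le_of_mul_le_mul_left hkey h2jpos
      have hEdE : E ≤ d * E := Nat.le_mul_of_pos_left E (Nat.pos_of_ne_zero hdn0)
      omega
    obtain ⟨τ, hτle, hτsum⟩ := exists_sub_sum A g D hfeas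
    have hx : ptA A (fun α => (τ α : ℚ) / D) ∈ gridA A D := ptA_mem_gridA τ hτsum
    -- bounds: μ ≤ 2 l on A
    have hμle : ∀ α ∈ A, (τ α : ℚ) / D ≤ 2 * l α := by
      intro α hα
      rw [div_le_iff₀ (by positivity : (0:ℚ) < (D:ℚ))]
      have h1 : (g α : ℚ) * 2 ^ j ≤ (cf α : ℚ) * E := by
        exact_mod_cast Nat.div_mul_le_self (cf α * E) (2 ^ j)
      have h2 : (cf α : ℚ) = 2 ^ (j + 1) * l α * d := hcf α hα
      have hτg : (τ α : ℚ) ≤ (g α : ℚ) := by exact_mod_cast hτle α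
      have hDcast : (D : ℚ) = (d : ℚ) * E := by rw [hD]; push_cast; ring
      rw [hDcast]
      have h2jq : (0:ℚ) < 2 ^ j := by positivity
      rw [h2] at h1
      have h3 : (τ α : ℚ) * 2 ^ j ≤ 2 ^ (j + 1) * l α * d * E :=
        le_trans (mul_le_mul_of_nonneg_right hτg h2jq.le) h1
      have h4 : (τ α : ℚ) ≤ 2 ^ (j + 1) * l α * (d : ℚ) * E / 2 ^ j :=
        (le_div_iff₀ h2jq).mpr h3
      have h5 : 2 ^ (j + 1) * l α * (d : ℚ) * E / 2 ^ j = 2 * l α * ((d : ℚ) * E) := by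
        field_simp
        ring
      rw [h5] at h4
      exact h4
    -- ν
    set ν : (Fin n → ℕ) → ℚ := fun α => 2 * l α - (τ α : ℚ) / D with hν
    have hν0 : ∀ α ∈ A, 0 ≤ ν α := by
      intro α hα
      simp only [hν]
      linarith [hμle α hα]
    have hνsum : ∑ α ∈ A, ν α = 1 := by
      simp only [hν]
      rw [Finset.sum_sub_distrib, ← Finset.sum_div]
      have hτQ : (∑ α ∈ A, (τ α : ℚ)) = (D : ℚ) := by exact_mod_cast hτsum
      rw [hτQ]
      rw [show (∑ α ∈ A, 2 * l α) = 2 * ∑ α ∈ A, l α from (Finset.mul_sum _ _ _).symm]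
      rw [hsum, div_self hDQ0]
      norm_num
    have hνlev : ∀ α ∈ A, ODQ (2 ^ j * ν α) := by
      intro α hα
      have heq : 2 ^ j * ν α = 2 ^ (j + 1) * l α - 2 ^ j * ((τ α : ℚ) / D) := by
        simp only [hν]; ring
      rw [heq]
      refine (hlev α hα).sub ⟨2 ^ j * τ α, D, hDodd, ?_⟩
      push_cast
      field_simp
    -- pt relation
    have hrel : ∀ i, ptA A ν i = 2 * ptA A l i - ptA A (fun α => (τ α : ℚ) / D) i := by
      intro i
      unfold ptA
      rw [Finset.mul_sum, ← Finset.sum_sub_distrib]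
      apply Finset.sum_congr rfl
      intro α _
      simp only [hν]
      ring
    have hxEV : ∀ i, EVQ (ptA A (fun α => (τ α : ℚ) / D) i) :=
      fun i => gridA_parity hAev hDodd hx i
    have hyEV : ∀ i, EVQ (ptA A ν i) := by
      intro i
      rw [hrel i]
      exact (EVQ.two_mul_of_odq (hptOD i)).sub (hxEV i)
    by_cases hxy : ptA A ν = ptA A (fun α => (τ α : ℚ) / D)
    · -- pt l is itself the grid point
      have hptl : ptA A l = ptA A (fun α => (τ α : ℚ) / D) := by
        funext i
        have h1 := hrel i
        rw [hxy] at h1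
        linarith
      have hmem : ptA A l ∈ gridA A D := by rw [hptl]; exact hx
      exact grid_case A hAev hDodd hmem
    · obtain ⟨M', hM'img, hM'pt, hM'OD, hM'EV, hM'med⟩ :=
        ih ν hν0 hνsum hνlev (fun i => (hyEV i).odq)
      refine ⟨insert (ptA A l) (M' ∪ gridA A D), ?_, Finset.mem_insert_self _ _, ?_, ?_, ?_⟩
      · exact fun u hu => Finset.mem_insert_of_mem (Finset.mem_union_left _ (hM'img hu))
      · intro u hu i
        rcases Finset.mem_insert.mp hu with rfl | hu'
        · exact hptOD i
        rcases Finset.mem_union.mp hu' with h | h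
        · exact hM'OD u h i
        · exact (gridA_parity hAev hDodd h i).odq
      · intro u hu hne i
        rcases Finset.mem_insert.mp hu with rfl | hu'
        · exact absurd rfl hne
        rcases Finset.mem_union.mp hu' with h | h
        · by_cases huy : u = ptA A ν
          · rw [huy]; exact hyEV i
          · exact hM'EV u h huy i
        · exact gridA_parity hAev hDodd h i
      · intro u hu huA
        rcases Finset.mem_insert.mp hu with rfl | hu'
        · refine ⟨ptA A (fun α => (τ α : ℚ) / D),
            Finset.mem_insert_of_mem (Finset.mem_union_right _ hx),
            ptA A ν, Finset.mem_insert_of_mem (Finset.mem_union_left _ hM'pt),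
            fun h => hxy h.symm, ?_⟩
          funext i
          have h1 := hrel i
          have h2 : ((2⁻¹ : ℚ) • (ptA A (fun α => (τ α : ℚ) / D) + ptA A ν)) i
              = (2⁻¹ : ℚ) * (ptA A (fun α => (τ α : ℚ) / D) i + ptA A ν i) := by
            simp [Pi.smul_apply, Pi.add_apply, smul_eq_mul]
          rw [h2]
          linarith
        rcases Finset.mem_union.mp hu' with h | h
        · obtain ⟨v, hv, w, hw, hvw, heq⟩ := hM'med u h huA
          exact ⟨v, Finset.mem_insert_of_mem (Finset.mem_union_left _ hv),
            w, Finset.mem_insert_of_mem (Finset.mem_union_left _ hw), hvw, heq⟩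
        · obtain ⟨v, hv, w, hw, hvw, heq⟩ := gridA_mediated hDodd h huA
          exact ⟨v, Finset.mem_insert_of_mem (Finset.mem_union_right _ hv),
            w, Finset.mem_insert_of_mem (Finset.mem_union_right _ hw), hvw, heq⟩


/-- Let `𝒜` be a trellis in `ℕⁿ` and let `β` be a lattice point in the
relative interior of the convex hull of `𝒜`. Then there exists an `𝒜`-rational mediated set
`M` containing `β` such that every coordinate of every point of `M` has odd denominator and
every coordinate of every point of `M \ {β}` has even numerator. -/
theorem exists_ratMediatedSet_of_trellis_parity {n : ℕ} (A : Finset (Fin n → ℕ))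
    (hA : IsTrellis A) (β : Fin n → ℕ)
    (hβ : toR β ∈ intrinsicInterior ℝ (convexHull ℝ (toR '' (A : Set (Fin n → ℕ))))) :
    ∃ M : Finset (Fin n → ℚ), IsRatMediatedSet (A.image toQ) M ∧ toQ β ∈ M ∧
      (∀ u ∈ M, ∀ i, Odd (u i).den) ∧
      (∀ u ∈ M, u ≠ toQ β → ∀ i, Even (u i).num) := by
  classical
  obtain ⟨hAne, hAev, hAI⟩ := hA
  -- Step 1: real convex weights
  have hconv : toR β ∈ convexHull ℝ (toR '' (A : Set (Fin n → ℕ))) :=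
    intrinsicInterior_subset hβ
  have himg : toR '' (A : Set (Fin n → ℕ))
      = ((A.image toR : Finset (Fin n → ℝ)) : Set (Fin n → ℝ)) := by
    rw [Finset.coe_image]
  rw [himg, Finset.convexHull_eq] at hconv
  obtain ⟨w, hw0, hw1, hwc⟩ := hconv
  rw [Finset.centerMass_eq_of_sum_1 _ id hw1] at hwc
  have hRinj : Function.Injective (toR (n := n)) := by
    intro a b hab
    funext i
    have h1 := congrFun hab i
    simp only [toR] at h1
    exact_mod_cast h1
  have hRinj' : ∀ a ∈ A, ∀ b ∈ A, toR a = toR b → a = b := fun a _ b _ h => hRinj h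
  have hv1 : ∑ α ∈ A, w (toR α) = 1 := by
    rw [← Finset.sum_image (g := toR) (f := w) hRinj']
    exact hw1
  have hwc' : ∑ α ∈ A, w (toR α) • toR α = toR β := by
    rw [Finset.sum_image (g := toR) (f := fun y => w y • id y) hRinj'] at hwc
    exact hwc
  have hvc : ∀ i, ∑ α ∈ A, w (toR α) * (α i : ℝ) = (β i : ℝ) := by
    intro i
    have h1 := congrFun hwc' i
    rw [Finset.sum_apply] at h1
    simpa [toR, smul_eq_mul] using h1
  -- Step 2: rational weights via duality
  set FQ : (Fin n → ℕ) → (Option (Fin n) → ℚ) :=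
    fun α o => o.elim 1 (fun i => (α i : ℚ)) with hFQ
  set bQ : (Option (Fin n) → ℚ) := fun o => o.elim 1 (fun i => (β i : ℚ)) with hbQ
  have hspan : bQ ∈ Submodule.span ℚ
      ((A.image FQ : Finset (Option (Fin n) → ℚ)) : Set (Option (Fin n) → ℚ)) := by
    by_contra hb
    set p : Submodule ℚ (Option (Fin n) → ℚ) :=
      Submodule.span ℚ ((A.image FQ : Finset (Option (Fin n) → ℚ)) : Set _) with hp
    have hq0 : p.mkQ bQ ≠ 0 := by
      rw [Submodule.mkQ_apply, Ne, Submodule.Quotient.mk_eq_zero]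
      exact hb
    obtain ⟨gφ, hgφ⟩ : ∃ gφ : Module.Dual ℚ ((Option (Fin n) → ℚ) ⧸ p),
        gφ (p.mkQ bQ) ≠ 0 := by
      by_contra hng
      push_neg at hng
      exact hq0 ((Module.forall_dual_apply_eq_zero_iff ℚ _).mp hng)
    set f : (Option (Fin n) → ℚ) →ₗ[ℚ] ℚ := gφ.comp p.mkQ with hf
    have hfp : ∀ u ∈ p, f u = 0 := by
      intro u hu
      have h1 : p.mkQ u = 0 := by
        rw [Submodule.mkQ_apply, Submodule.Quotient.mk_eq_zero]
        exact hu
      simp [hf, LinearMap.comp_apply, h1]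
    set G : (Option (Fin n) → ℝ) →ₗ[ℝ] ℝ :=
      ∑ o : Option (Fin n),
        ((f (fun j => if o = j then (1:ℚ) else 0) : ℚ) : ℝ) • LinearMap.proj o with hG
    have hGval : ∀ u : Option (Fin n) → ℚ,
        G (fun o => ((u o : ℚ) : ℝ)) = ((f u : ℚ) : ℝ) := by
      intro u
      have h1 : f u = ∑ o : Option (Fin n), u o • f (fun j => if o = j then (1:ℚ) else 0) :=
        LinearMap.pi_apply_eq_sum_univ f u
      rw [h1]
      simp only [hG, LinearMap.sum_apply, LinearMap.smul_apply, LinearMap.proj_apply,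
        smul_eq_mul]
      push_cast
      apply Finset.sum_congr rfl
      intro o _
      ring
    have hker : ∀ α ∈ A, f (FQ α) = 0 := by
      intro α hα
      apply hfp
      apply Submodule.subset_span
      rw [Finset.coe_image]
      exact Set.mem_image_of_mem _ (Finset.mem_coe.mpr hα)
    have hreal : ∑ α ∈ A, w (toR α) • (fun o => ((FQ α o : ℚ) : ℝ))
        = (fun o => ((bQ o : ℚ) : ℝ)) := by
      funext o
      rw [Finset.sum_apply]
      cases o with
      | none => simpa [hFQ, hbQ, smul_eq_mul] using hv1
      | some i => simpa [hFQ, hbQ, smul_eq_mul] using hvc i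
    have hG0 : G (fun o => ((bQ o : ℚ) : ℝ)) = 0 := by
      rw [← hreal, map_sum]
      apply Finset.sum_eq_zero
      intro α hα
      rw [map_smul, hGval, hker α hα]
      simp
    rw [hGval] at hG0
    have hfb : f bQ = 0 := by exact_mod_cast hG0
    exact hgφ (by simpa [hf] using hfb)
  obtain ⟨gc, -, hgc⟩ := Submodule.mem_span_finset.mp hspan
  have hFQinj : ∀ a ∈ A, ∀ b ∈ A, FQ a = FQ b → a = b := by
    intro a _ b _ h
    funext i
    have h1 := congrFun h (some i)
    simp only [hFQ, Option.elim] at h1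
    exact_mod_cast h1
  rw [Finset.sum_image hFQinj] at hgc
  set l : (Fin n → ℕ) → ℚ := fun α => gc (FQ α) with hl
  have hl1 : ∑ α ∈ A, l α = 1 := by
    have h1 := congrFun hgc none
    rw [Finset.sum_apply] at h1
    simpa [hFQ, hbQ, hl, smul_eq_mul] using h1
  have hlpt : ∀ i, ∑ α ∈ A, l α * (α i : ℚ) = (β i : ℚ) := by
    intro i
    have h1 := congrFun hgc (some i)
    rw [Finset.sum_apply] at h1
    simpa [hFQ, hbQ, hl, smul_eq_mul] using h1
  -- Step 3: nonnegativity via affine independence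
  have hu1 : ∑ a : ↥A, w (toR ↑a) = 1 := by
    rw [Finset.sum_coe_sort A (fun α => w (toR α))]
    exact hv1
  have hu2 : ∑ a : ↥A, ((l ↑a : ℚ) : ℝ) = 1 := by
    rw [Finset.sum_coe_sort A (fun α => ((l α : ℚ) : ℝ))]
    have h2 : ((∑ α ∈ A, l α : ℚ) : ℝ) = ((1 : ℚ) : ℝ) := by rw [hl1]
    push_cast at h2
    exact h2
  have hc1 : Finset.univ.affineCombination ℝ (fun a : ↥A => toR ↑a)
      (fun a => w (toR ↑a)) = toR β := by
    rw [Finset.affineCombination_eq_linear_combination _ _ _ hu1]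
    rw [Finset.sum_coe_sort A (fun α => w (toR α) • toR α)]
    exact hwc'
  have hc2 : Finset.univ.affineCombination ℝ (fun a : ↥A => toR ↑a)
      (fun a => ((l ↑a : ℚ) : ℝ)) = toR β := by
    rw [Finset.affineCombination_eq_linear_combination _ _ _ hu2]
    rw [Finset.sum_coe_sort A (fun α => ((l α : ℚ) : ℝ) • toR α)]
    funext i
    rw [Finset.sum_apply]
    have h2 : ((∑ α ∈ A, l α * (α i : ℚ) : ℚ) : ℝ) = ((β i : ℚ) : ℝ) := by
      rw [hlpt i]
    push_cast at h2
    simpa [toR, smul_eq_mul] using h2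
  have hind := hAI.indicator_eq_of_affineCombination_eq Finset.univ Finset.univ
    (fun a => w (toR ↑a)) (fun a => ((l ↑a : ℚ) : ℝ)) hu1 hu2 (hc1.trans hc2.symm)
  have hl0 : ∀ α ∈ A, 0 ≤ l α := by
    intro α hα
    have h4 := congrFun hind ⟨α, hα⟩
    simp only [Finset.coe_univ, Set.indicator_univ] at h4
    have h5 : (0 : ℝ) ≤ ((l α : ℚ) : ℝ) := by
      rw [← h4]
      exact hw0 (toR α) (Finset.mem_image_of_mem _ hα)
    exact_mod_cast h5
  -- Step 4: levels and conclusion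
  have hlev : ∀ α ∈ A, ODQ (2 ^ (A.sup fun α => Classical.choose (exists_pow_odq (l α))) * l α) := by
    intro α hα
    exact odq_pow_mono (Classical.choose_spec (exists_pow_odq (l α)))
      (Finset.le_sup (f := fun α => Classical.choose (exists_pow_odq (l α))) hα)
  have hptl : ptA A l = toQ β := by
    funext i
    exact hlpt i
  have hptOD : ∀ i, ODQ (ptA A l i) := by
    intro i
    rw [hptl]
    exact ODQ.natCast (β i)
  obtain ⟨M, hMimg, hMpt, hMOD, hMEV, hMmed⟩ :=
    descent A (fun α hα i => hAev α hα i) _ l hl0 hl1 hlev hptOD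
  refine ⟨M, ⟨hMimg, hMmed⟩, by rw [← hptl]; exact hMpt,
    fun u hu i => (hMOD u hu i).odd_den, ?_⟩
  intro u hu hne i
  exact (hMEV u hu (by rw [hptl]; exact hne) i).even_num
end
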